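/- arXiv:1404.3395 — 2 statements merged into one kernel-verified Lean document; each statement's English description precedes it below -/
import Mathlib

section
/- For integers n ≥ 2 and 1 ≤ k ≤ n-1, there is a bijection between the set of distinguished internally ordered k-partitions of {1,...,n+k-1} and the set of triples (I, σ, D) where I is a subset of {1,...,n+k-1} of cardinality n, σ is a permutation of I (equivalently a linear arrangement i_{σ(1)},...,i_{σ(n)} of I), and D is a subset of cardinality k-1 of the n-2 middle entries {i_{σ(2)},...,i_{σ(n-1)}} of that arrangement. -/
/-- An admissible internally ordered `k`-partition of `{1,...,m}`: a family of `k`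
pairwise disjoint duplicate-free lists, each of length ≥ 2, exhausting `{1,...,m}`. -/
def IsIOPart (m k : ℕ) (P : Finset (List ℕ)) : Prop :=
  P.card = k ∧ (∀ l ∈ P, l.Nodup ∧ 2 ≤ l.length) ∧
  (∀ l ∈ P, ∀ l' ∈ P, l ≠ l' → ∀ x ∈ l, x ∉ l') ∧
  (∀ x, x ∈ Finset.Icc 1 m ↔ ∃ l ∈ P, x ∈ l)

/-- A triple `(I, σ, D)` is encoded as a pair `(L, D)`: `L` is a duplicate-free list
of length `n` with entries in `{1,...,n+k-1}` (the arrangement `i_{σ(1)},...,i_{σ(n)}`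
of the `n`-element set `I = L.toFinset`), and `D` is a `(k-1)`-element subset of the
`n-2` middle entries of `L`. -/
def IsTriple (n k : ℕ) (p : List ℕ × Finset ℕ) : Prop :=
  p.1.Nodup ∧ p.1.length = n ∧ p.1.toFinset ⊆ Finset.Icc 1 (n + k - 1) ∧
  p.2 ⊆ ((p.1.drop 1).dropLast).toFinset ∧ p.2.card = k - 1

namespace Stmt5
open List

def splitD (D : Finset ℕ) : List ℕ → List (List ℕ)
  | [] => [[]]
  | x :: xs =>
    let r := splitD D xs
    if x ∈ D then [x] :: r else (x :: r.headI) :: r.tail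

theorem splitD_ne_nil (D : Finset ℕ) (L : List ℕ) : splitD D L ≠ [] := by
  cases L with
  | nil => simp [splitD]
  | cons x xs => simp only [splitD]; split <;> simp

theorem headI_cons_tail {α} [Inhabited α] (l : List α) (h : l ≠ []) :
    l.headI :: l.tail = l := by
  cases l with
  | nil => exact absurd rfl h
  | cons a t => rfl

theorem splitD_headI_ne_nil (D : Finset ℕ) (L : List ℕ) (h : L ≠ []) :
    (splitD D L).headI ≠ [] := by
  cases L with
  | nil => exact absurd rfl h
  | cons x xs => simp only [splitD]; split <;> simp

theorem splitD_segs_ne_nil (D : Finset ℕ) (L : List ℕ) (hL : L ≠ [])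
    (h : ∀ x, L.getLast? = some x → x ∉ D) :
    ∀ s ∈ splitD D L, s ≠ [] := by
  induction L with
  | nil => exact absurd rfl hL
  | cons x xs ih =>
    intro s hs
    rcases eq_or_ne xs [] with h0 | h0
    · subst h0
      have hx : x ∉ D := h x rfl
      simp only [splitD, if_neg hx, splitD] at hs
      simp at hs
      simp [hs]
    · have h' : ∀ y, xs.getLast? = some y → y ∉ D := by
        obtain ⟨y, ys, rfl⟩ := exists_cons_of_ne_nil h0
        intro z hz
        exact h z (by rwa [getLast?_cons_cons])
      have ihs := ih h0 h'
      simp only [splitD] at hs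
      split at hs
      · rcases mem_cons.1 hs with rfl | hs
        · simp
        · exact ihs s hs
      · rcases mem_cons.1 hs with rfl | hs
        · simp
        · exact ihs s (mem_of_mem_tail hs)

theorem splitD_headI_len (D : Finset ℕ) (x : ℕ) (xs : List ℕ) (hxs : xs ≠ [])
    (hx : x ∉ D) : 2 ≤ (splitD D (x :: xs)).headI.length := by
  have h1 := splitD_headI_ne_nil D xs hxs
  have h2 : 0 < (splitD D xs).headI.length := length_pos_iff.2 h1
  simp only [splitD, if_neg hx]
  show 2 ≤ (x :: (splitD D xs).headI).length
  simp only [length_cons]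
  omega

theorem splitD_of_not_mem (D : Finset ℕ) (s : List ℕ) (hs : s ≠ [])
    (h : ∀ x ∈ s, x ∉ D) : splitD D s = [s] := by
  induction s with
  | nil => exact absurd rfl hs
  | cons a t ih =>
    have ha : a ∉ D := h a (by simp)
    rcases eq_or_ne t [] with rfl | ht
    · simp [splitD, ha]
    · have := ih ht (fun x hx => h x (by simp [hx]))
      simp [splitD, ha, this]

theorem splitD_peel (D : Finset ℕ) (s t : List ℕ) (hs : s ≠ [])
    (hd : ∀ x ∈ s.dropLast, x ∉ D) (hl : s.getLastD 0 ∈ D) :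
    splitD D (s ++ t) = s :: splitD D t := by
  induction s with
  | nil => exact absurd rfl hs
  | cons a s' ih =>
    rcases eq_or_ne s' [] with rfl | hs'
    · have ha : a ∈ D := by simpa [getLastD] using hl
      simp [splitD, ha]
    · have ha : a ∉ D := hd a (by
        rw [dropLast_cons_of_ne_nil hs']; simp)
      have hd' : ∀ x ∈ s'.dropLast, x ∉ D := fun x hx => hd x (by
        rw [dropLast_cons_of_ne_nil hs']; simp [hx])
      have hl' : s'.getLastD 0 ∈ D := by
        obtain ⟨y, ys, rfl⟩ := exists_cons_of_ne_nil hs'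
        simpa [getLastD] using hl
      have := ih hs' hd' hl'
      rw [cons_append]
      simp only [splitD, if_neg ha, this]
      simp


theorem flatten_splitD (D : Finset ℕ) (L : List ℕ) : (splitD D L).flatten = L := by
  induction L with
  | nil => simp [splitD]
  | cons x xs ih =>
    simp only [splitD]
    split
    · simpa using ih
    · rw [show ((x :: (splitD D xs).headI) :: (splitD D xs).tail).flatten
          = x :: ((splitD D xs).headI :: (splitD D xs).tail).flatten by simp]
      rw [headI_cons_tail _ (splitD_ne_nil D xs), ih]


/-- lasts of the non-final segments are exactly the D-elements in order -/
theorem splitD_lasts (D : Finset ℕ) (L : List ℕ) :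
    (splitD D L).dropLast.map (·.getLastD 0) = L.filter (· ∈ D) := by
  induction L with
  | nil => simp [splitD]
  | cons x xs ih =>
    simp only [splitD, filter_cons]
    split
    · rename_i hx
      rw [dropLast_cons_of_ne_nil (splitD_ne_nil D xs)]
      simp only [map_cons, ih]
      simp [hx]
    · rename_i hx
      rcases eq_or_ne (splitD D xs).tail [] with ht | ht
      · -- splitD xs = [s]; dropLast of single = []
        have h1 : (splitD D xs).dropLast = [] := by
          cases hsp : splitD D xs with
          | nil => simp
          | cons s ss => rw [hsp] at ht; simp at ht; simp [ht]
        have h2 : ((x :: (splitD D xs).headI) :: (splitD D xs).tail).dropLast = [] := by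
          rw [ht]; simp
        rw [h2]
        rw [h1] at ih
        simp only [map_nil] at ih ⊢
        simp [hx, ← ih]
      · -- tail nonempty
        have hxs : xs ≠ [] := by
          intro h; subst h; simp [splitD] at ht
        have hxe : (splitD D xs).headI ≠ [] := splitD_headI_ne_nil D xs hxs
        rw [dropLast_cons_of_ne_nil ht]
        rw [← headI_cons_tail _ (splitD_ne_nil D xs), dropLast_cons_of_ne_nil ht] at ih
        simp only [map_cons] at ih ⊢
        have : (x :: (splitD D xs).headI).getLastD 0 = (splitD D xs).headI.getLastD 0 := by
          cases hsp : (splitD D xs).headI with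
          | nil => exact absurd hsp hxe
          | cons a t => simp [getLastD]
        rw [this, ih]
        simp [hx]


theorem getLastD_eq_getLast (s : List ℕ) (hs : s ≠ []) :
    s.getLastD 0 = s.getLast hs := by
  cases s with
  | nil => exact absurd rfl hs
  | cons a t =>
    rw [getLast_eq_getLastD, getLastD_eq_getLast?, getLastD_eq_getLast?,
      getLast?_cons]
    cases t <;> simp

theorem getLastD_mem (s : List ℕ) (hs : s ≠ []) : s.getLastD 0 ∈ s := by
  rw [getLastD_eq_getLast s hs]; exact getLast_mem hs

theorem getLastD_not_mem_dropLast (s : List ℕ) (hs : s ≠ []) (hnd : s.Nodup) :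
    s.getLastD 0 ∉ s.dropLast := by
  intro hmem
  have := dropLast_append_getLast hs
  rw [← this] at hnd
  rw [nodup_append] at hnd
  exact hnd.2.2 (s.getLastD 0) hmem (s.getLastD 0) (by rw [getLastD_eq_getLast s hs] at hmem ⊢; simp) rfl

theorem splitD_flatten (D : Finset ℕ) (segs : List (List ℕ)) (hne : segs ≠ [])
    (h1 : ∀ s ∈ segs, s ≠ []) (h2 : segs.flatten.Nodup)
    (hmem : ∀ x ∈ segs.flatten, (x ∈ D ↔ x ∈ segs.dropLast.map (·.getLastD 0))) :
    splitD D segs.flatten = segs := by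
  induction segs with
  | nil => exact absurd rfl hne
  | cons s rest ih =>
    have hsne : s ≠ [] := h1 s (by simp)
    rcases eq_or_ne rest [] with rfl | hrne
    · simp only [flatten_cons, flatten_nil, append_nil] at h2 ⊢
      refine splitD_of_not_mem D s hsne ?_
      intro x hx hxD
      have := (hmem x (by simp [hx])).1 hxD
      simp at this
    · have hdl : (s :: rest).dropLast = s :: rest.dropLast :=
        dropLast_cons_of_ne_nil hrne
      have h2' : (s ++ rest.flatten).Nodup := by simpa using h2
      rw [nodup_append] at h2'
      obtain ⟨hnds, hndr, hdisj⟩ := h2'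
      have hlastmem : ∀ y ∈ rest.dropLast.map (·.getLastD 0), y ∈ rest.flatten := by
        intro y hy
        simp only [mem_map] at hy
        obtain ⟨s', hs', rfl⟩ := hy
        have hs'r : s' ∈ rest := dropLast_subset rest hs'
        exact mem_flatten.2 ⟨s', hs'r, getLastD_mem s' (h1 s' (by simp [hs'r]))⟩
      have step : splitD D (s ++ rest.flatten) = s :: splitD D rest.flatten := by
        refine splitD_peel D s rest.flatten hsne ?_ ?_
        · intro x hx hxD
          have hxs : x ∈ s := dropLast_subset s hx
          have := (hmem x (by simp [hxs])).1 hxD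
          rw [hdl] at this
          simp only [map_cons, mem_cons] at this
          rcases this with h | h
          · exact getLastD_not_mem_dropLast s hsne hnds (h ▸ hx)
          · exact hdisj x hxs x (hlastmem x h) rfl
        · refine (hmem _ (by
            have := getLastD_mem s hsne
            simp only [flatten_cons, mem_append]
            simp at this ⊢
            tauto)).2 ?_
          rw [hdl]; simp
      rw [flatten_cons, step]
      congr 1
      refine ih hrne (fun s' hs' => h1 s' (by simp [hs'])) hndr ?_
      intro x hx
      rw [hmem x (by simp [hx]), hdl]
      simp only [map_cons, mem_cons]
      constructor
      · rintro (h | h)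
        · subst h
          exact absurd rfl (hdisj _ (getLastD_mem s hsne) _ hx)
        · exact h
      · intro h; exact Or.inr h


theorem zip_flatten_perm : ∀ (cs : List ℕ) (ts : List (List ℕ)),
    cs.length = ts.length →
    (List.zipWith List.cons cs ts).flatten ~ cs ++ ts.flatten
  | [], [], _ => by simp
  | c :: cs, t :: ts, h => by
    simp only [zipWith_cons_cons, flatten_cons, cons_append]
    refine Perm.cons c ?_
    calc t ++ (zipWith List.cons cs ts).flatten
        ~ t ++ (cs ++ ts.flatten) :=
          Perm.append_left t (zip_flatten_perm cs ts (by simpa using h))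
      _ ~ cs ++ (t ++ ts.flatten) := perm_append_comm_assoc t cs ts.flatten

theorem zip_head_tail : ∀ (O : List (List ℕ)), (∀ o ∈ O, o ≠ []) →
    List.zipWith List.cons (O.map List.headI) (O.map List.tail) = O
  | [], _ => rfl
  | o :: O, h => by
    have ho : o ≠ [] := h o (by simp)
    simp only [map_cons, zipWith_cons_cons]
    rw [zip_head_tail O (fun x hx => h x (by simp [hx]))]
    rw [headI_cons_tail o ho]

theorem map_headI_zip : ∀ (cs : List ℕ) (ts : List (List ℕ)),
    cs.length = ts.length → (List.zipWith List.cons cs ts).map List.headI = cs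
  | [], [], _ => rfl
  | c :: cs, t :: ts, h => by
    simp only [zipWith_cons_cons, map_cons, headI]
    rw [map_headI_zip cs ts (by simpa using h)]

theorem map_tail_zip : ∀ (cs : List ℕ) (ts : List (List ℕ)),
    cs.length = ts.length → (List.zipWith List.cons cs ts).map List.tail = ts
  | [], [], _ => rfl
  | c :: cs, t :: ts, h => by
    simp only [zipWith_cons_cons, map_cons, tail_cons]
    rw [map_tail_zip cs ts (by simpa using h)]

theorem tails_flatten_length : ∀ (O : List (List ℕ)), (∀ o ∈ O, o ≠ []) →
    ((O.map List.tail).flatten).length + O.length = O.flatten.length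
  | [], _ => rfl
  | o :: O, h => by
    have ho : o ≠ [] := h o (by simp)
    have := tails_flatten_length O (fun x hx => h x (by simp [hx]))
    simp only [map_cons, flatten_cons, length_append, length_cons]
    have hlo : o.tail.length + 1 = o.length := by
      cases o with
      | nil => exact absurd rfl ho
      | cons a t => simp
    omega

theorem mem_middle (L : List ℕ) (x : ℕ) (hx : x ∈ L) (h1 : L.head? ≠ some x)
    (h2 : L.getLast? ≠ some x) : x ∈ (L.drop 1).dropLast := by
  cases L with
  | nil => simp at hx
  | cons c t =>
    have hxt : x ∈ t := by
      rcases mem_cons.1 hx with rfl | h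
      · simp at h1
      · exact h
    rw [drop_one, tail_cons]
    have ht : t ≠ [] := ne_nil_of_mem hxt
    have hgl : (c :: t).getLast? = some (t.getLast ht) := by
      rw [getLast?_cons, getLast?_eq_getLast ht]
      rfl
    have h2' : t.getLast ht ≠ x := fun hh => h2 (by rw [hgl, hh])
    rw [← dropLast_append_getLast ht] at hxt
    rcases mem_append.1 hxt with h | h
    · exact h
    · simp at h
      exact absurd h.symm h2'

theorem sorted_unique (l₁ l₂ : List (List ℕ)) (h : l₁ ~ l₂)
    (s₁ : l₁.Pairwise (fun a b => a.headI < b.headI))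
    (s₂ : l₂.Pairwise (fun a b => a.headI < b.headI)) : l₁ = l₂ := by
  haveI : Std.Antisymm (fun a b : List ℕ => a.headI < b.headI) :=
    ⟨fun a b h1 h2 => absurd (h1.trans h2) (lt_irrefl _)⟩
  exact List.Perm.eq_of_pairwise' s₁ s₂ h

theorem getLastD_mem' (t : List ℕ) (ht : t ≠ []) (d : ℕ) : t.getLastD d ∈ t := by
  rw [getLastD_eq_getLast?, getLast?_eq_getLast ht]
  exact getLast_mem ht



theorem tails_flatten_sublist : ∀ (O : List (List ℕ)),
    ((O.map List.tail).flatten) <+ O.flatten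
  | [] => Sublist.refl _
  | o :: O => by
    simp only [map_cons, flatten_cons]
    exact (tail_sublist o).append (tails_flatten_sublist O)

theorem mem_zip_cons : ∀ {cs : List ℕ} {ts : List (List ℕ)} {p : List ℕ},
    p ∈ List.zipWith List.cons cs ts → ∃ c s, c ∈ cs ∧ s ∈ ts ∧ p = c :: s
  | c :: cs, t :: ts, p, hp => by
    simp only [zipWith_cons_cons, mem_cons] at hp
    rcases hp with rfl | hp
    · exact ⟨c, t, by simp⟩
    · obtain ⟨c', s', hc', hs', rfl⟩ := mem_zip_cons hp
      exact ⟨c', s', by simp [hc', hs']⟩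

/-! ### the two maps -/

noncomputable def gO (P : Finset (List ℕ)) (M : List ℕ) : List (List ℕ) :=
  ((P.erase M).toList).mergeSort (fun a b => decide (a.headI ≤ b.headI))

noncomputable def gSegs (P : Finset (List ℕ)) (M : List ℕ) : List (List ℕ) :=
  M :: (gO P M).map List.tail

noncomputable def gMap (P : Finset (List ℕ)) (M : List ℕ) : List ℕ × Finset ℕ :=
  ((gSegs P M).flatten, ((gSegs P M).dropLast.map (·.getLastD 0)).toFinset)

def fParts (m : ℕ) (L : List ℕ) (D : Finset ℕ) : List (List ℕ) :=
  (splitD D L).headI ::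
    List.zipWith List.cons ((Finset.Icc 1 m \ L.toFinset).sort (· ≤ ·)) (splitD D L).tail

def fMap (m : ℕ) (L : List ℕ) (D : Finset ℕ) : Finset (List ℕ) × List ℕ :=
  ((fParts m L D).toFinset, (splitD D L).headI)

theorem gO_perm (P : Finset (List ℕ)) (M : List ℕ) :
    gO P M ~ (P.erase M).toList := mergeSort_perm _ _

theorem gO_toFinset (P : Finset (List ℕ)) (M : List ℕ) :
    (gO P M).toFinset = P.erase M := by
  rw [toFinset_eq_of_perm _ _ (gO_perm P M), Finset.toList_toFinset]

theorem gO_nodup (P : Finset (List ℕ)) (M : List ℕ) : (gO P M).Nodup :=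
  (gO_perm P M).nodup_iff.2 (Finset.nodup_toList _)

theorem mem_gO {P : Finset (List ℕ)} {M o : List ℕ} :
    o ∈ gO P M ↔ o ∈ P.erase M := by
  rw [← List.mem_toFinset, gO_toFinset]

theorem gO_sorted (P : Finset (List ℕ)) (M : List ℕ) :
    (gO P M).Pairwise (fun a b => a.headI ≤ b.headI) := by
  have h := List.pairwise_mergeSort (le := fun a b : List ℕ => decide (a.headI ≤ b.headI))
    (by intro a b c h1 h2; simp only [decide_eq_true_eq] at *; omega)
    (by intro a b; simp only [Bool.or_eq_true, decide_eq_true_eq]; omega)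
    ((P.erase M).toList)
  exact h.imp (by simp)

theorem gSegs_facts (m k : ℕ) (P : Finset (List ℕ)) (M : List ℕ)
    (hP : IsIOPart m k P) (hM : M ∈ P) :
    (∀ s ∈ gSegs P M, s ≠ []) ∧ (gSegs P M).flatten.Nodup ∧
    2 ≤ (gSegs P M).headI.length ∧ (gO P M).length = k - 1 ∧
    (gSegs P M).flatten.length + (k - 1) = m ∧
    (gSegs P M).flatten.toFinset ∪ ((gO P M).map List.headI).toFinset
      = Finset.Icc 1 m ∧
    Disjoint (gSegs P M).flatten.toFinset ((gO P M).map List.headI).toFinset ∧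
    ((gO P M).map List.headI).Nodup ∧
    List.Pairwise List.Disjoint (M :: gO P M) := by
  obtain ⟨hcard, hparts, hdisj, hcover⟩ := hP
  set O := gO P M with hOdef
  have hOmem : ∀ o ∈ O, o ∈ P ∧ o ≠ M := by
    intro o ho
    have h := mem_gO.1 ho
    exact ⟨Finset.mem_of_mem_erase h, Finset.ne_of_mem_erase h⟩
  have hMnd := (hparts M hM).1
  have hMlen := (hparts M hM).2
  have hMne : M ≠ [] := by intro h; rw [h] at hMlen; simp at hMlen
  have hOne : ∀ o ∈ O, o ≠ [] := by
    intro o ho h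
    have := (hparts o (hOmem o ho).1).2
    rw [h] at this; simp at this
  have hOtne : ∀ o ∈ O, o.tail ≠ [] := by
    intro o ho
    have h2 := (hparts o (hOmem o ho).1).2
    cases o with
    | nil => simp at h2
    | cons a t =>
      simp only [tail_cons]
      intro h; rw [h] at h2; simp at h2
  have hPair : List.Pairwise List.Disjoint (M :: O) := by
    rw [pairwise_cons]
    constructor
    · intro o ho x hxM hxo
      exact hdisj M hM o (hOmem o ho).1 (Ne.symm (hOmem o ho).2) x hxM hxo
    · refine (gO_nodup P M).imp_of_mem ?_
      intro a b ha hb hab x hxa hxb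
      exact hdisj a (hOmem a ha).1 b (hOmem b hb).1 hab x hxa hxb
  have hfullnd : (M ++ O.flatten).Nodup := by
    have h : ((M :: O).flatten).Nodup := by
      rw [nodup_flatten]
      refine ⟨?_, hPair⟩
      intro l hl
      rcases mem_cons.1 hl with rfl | hl
      · exact hMnd
      · exact (hparts l (hOmem l hl).1).1
    simpa using h
  have hfullfin : (M ++ O.flatten).toFinset = Finset.Icc 1 m := by
    ext x
    simp only [List.toFinset_append, Finset.mem_union, List.mem_toFinset, mem_flatten]
    rw [hcover x]
    constructor
    · rintro (h | ⟨l, hl, hxl⟩)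
      · exact ⟨M, hM, h⟩
      · exact ⟨l, (hOmem l hl).1, hxl⟩
    · rintro ⟨l, hl, hxl⟩
      by_cases hlM : l = M
      · subst hlM; exact Or.inl hxl
      · exact Or.inr ⟨l, mem_gO.2 (Finset.mem_erase.2 ⟨hlM, hl⟩), hxl⟩
  have hOlen : O.length = k - 1 := by
    rw [(gO_perm P M).length_eq, Finset.length_toList,
      Finset.card_erase_of_mem hM, hcard]
  have hflen : (M ++ O.flatten).length = m := by
    have h1 : (M ++ O.flatten).toFinset.card = (M ++ O.flatten).length :=
      toFinset_card_of_nodup hfullnd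
    rw [hfullfin, Nat.card_Icc] at h1
    have hm : 1 ≤ m := by
      by_contra hm
      have hm0 : m = 0 := by omega
      have : M.length = 0 := by
        subst hm0
        rw [length_append] at h1
        omega
      omega
    omega
  have hs1 : ∀ s ∈ gSegs P M, s ≠ [] := by
    intro s hs
    rcases mem_cons.1 hs with rfl | hs
    · exact hMne
    · obtain ⟨o, ho, rfl⟩ := mem_map.1 hs
      exact hOtne o ho
  have hs2 : (gSegs P M).flatten.Nodup := by
    have hsub : (O.map List.tail).flatten <+ O.flatten := tails_flatten_sublist O
    have : (gSegs P M).flatten <+ M ++ O.flatten := by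
      simp only [gSegs, flatten_cons]
      exact (Sublist.refl M).append hsub
    exact hfullnd.sublist this
  have hperm1 : O.flatten ~ (O.map List.headI) ++ (O.map List.tail).flatten := by
    have h := zip_flatten_perm (O.map List.headI) (O.map List.tail) (by simp)
    rw [zip_head_tail O hOne] at h
    exact h
  have hperm2 : M ++ O.flatten ~ (gSegs P M).flatten ++ (O.map List.headI) := by
    simp only [gSegs, flatten_cons]
    calc M ++ O.flatten
        ~ M ++ ((O.map List.headI) ++ (O.map List.tail).flatten) :=
          Perm.append_left M hperm1
      _ ~ M ++ ((O.map List.tail).flatten ++ (O.map List.headI)) :=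
          Perm.append_left M perm_append_comm
      _ = (M ++ (O.map List.tail).flatten) ++ (O.map List.headI) := by
          rw [append_assoc]
  have hFP : ((gSegs P M).flatten ++ O.map List.headI).Nodup :=
    hperm2.nodup_iff.1 hfullnd
  have hFPfin : ((gSegs P M).flatten ++ O.map List.headI).toFinset
      = Finset.Icc 1 m := by
    rw [← toFinset_eq_of_perm _ _ hperm2, hfullfin]
  obtain ⟨hnd1, hnd2, hdisj12⟩ := nodup_append.1 hFP
  refine ⟨hs1, hs2, ?_, hOlen, ?_, ?_, ?_, hnd2, hPair⟩
  · simpa [gSegs] using hMlen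
  · have h3 := tails_flatten_length O hOne
    have h4 : (M ++ O.flatten).length = M.length + O.flatten.length :=
      length_append
    have h5 : (gSegs P M).flatten.length
        = M.length + ((O.map List.tail).flatten).length := by
      simp [gSegs, ← hOdef]
    omega
  · rw [← List.toFinset_append, hFPfin]
  · rw [List.disjoint_toFinset_iff_disjoint]
    intro a ha hb
    exact hdisj12 a ha a hb rfl

theorem getLastD_ne_headI (M : List ℕ) (hnd : M.Nodup) (hlen : 2 ≤ M.length) :
    M.getLastD 0 ≠ M.headI := by
  cases M with
  | nil => simp at hlen
  | cons a t =>
    have htne : t ≠ [] := by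
      intro h; rw [h] at hlen; simp at hlen
    have h3 : a ∉ t := (nodup_cons.1 hnd).1
    obtain ⟨b, ts, rfl⟩ := exists_cons_of_ne_nil htne
    show (a :: b :: ts).getLastD 0 ≠ a
    rw [getLastD_eq_getLast?, getLast?_cons_cons,
      getLast?_eq_getLast (cons_ne_nil b ts)]
    intro h
    apply h3
    rw [← show ((some ((b :: ts).getLast (cons_ne_nil _ _))).getD 0) = a from h]
    exact getLast_mem _

theorem gMap_isTriple (n k : ℕ) (P : Finset (List ℕ)) (M : List ℕ)
    (hn : 2 ≤ n) (hk1 : 1 ≤ k)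
    (hP : IsIOPart (n + k - 1) k P) (hM : M ∈ P) :
    IsTriple n k (gMap P M) := by
  obtain ⟨hs1, hs2, hhead, hOlen, hLlen, hunion, hdisjHL, hndH, hPair⟩ :=
    gSegs_facts (n + k - 1) k P M hP hM
  have hsegne : gSegs P M ≠ [] := cons_ne_nil _ _
  have hLn : (gSegs P M).flatten.length = n := by omega
  have hMne : M ≠ [] := by
    intro h
    have : (gSegs P M).headI = M := rfl
    rw [this, h] at hhead
    simp at hhead
  have hMhd : M.Nodup := by
    have := (nodup_flatten.1 hs2).1 M (by simp [gSegs])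
    exact this
  have hL_eq : (gSegs P M).flatten = M ++ ((gO P M).map List.tail).flatten := by
    simp [gSegs]
  have hLhead : (gSegs P M).flatten.head? = some M.headI := by
    rw [hL_eq]
    cases M with
    | nil => exact absurd rfl hMne
    | cons a t => simp
  refine ⟨hs2, hLn, ?_, ?_, ?_⟩
  · intro x hx
    rw [← hunion]
    exact Finset.mem_union_left _ hx
  · intro d hd
    simp only [gMap, List.mem_toFinset] at hd ⊢
    obtain ⟨s, hs, rfl⟩ := mem_map.1 hd
    have hssegs : s ∈ gSegs P M := dropLast_subset _ hs
    have hsne : s ≠ [] := hs1 s hssegs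
    have hdL : s.getLastD 0 ∈ (gSegs P M).flatten :=
      mem_flatten.2 ⟨s, hssegs, getLastD_mem s hsne⟩
    apply mem_middle _ _ hdL
    · -- not the head
      rw [hLhead]
      intro hcontra
      have hdM : s.getLastD 0 = M.headI := by
        injection hcontra.symm
      rcases mem_cons.1 hssegs with rfl | hs'
      · -- s = M
        exact getLastD_ne_headI s hMhd hhead hdM
      · -- s is a tail of some o
        obtain ⟨o, ho, rfl⟩ := mem_map.1 hs'
        have hdisjMo : List.Disjoint M o := (pairwise_cons.1 hPair).1 o ho
        have hhm : M.headI ∈ M := by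
          cases M with
          | nil => exact absurd rfl hMne
          | cons a t => simp
        have : o.tail.getLastD 0 ∈ o := tail_subset o (getLastD_mem _ (hs1 _ hssegs))
        rw [hdM] at this
        exact hdisjMo hhm this
    · -- not the last
      have hlastseg := getLast_mem hsegne
      set t : List ℕ := (gSegs P M).getLast hsegne with htdef
      have hsplit : gSegs P M = (gSegs P M).dropLast ++ [t] :=
        (dropLast_append_getLast hsegne).symm
      have htne : t ≠ [] := hs1 t hlastseg
      have hLsplit : (gSegs P M).flatten = (gSegs P M).dropLast.flatten ++ t := by
        conv_lhs => rw [hsplit]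
        simp
      have hgl : (gSegs P M).flatten.getLast? = t.getLast? := by
        rw [hLsplit, getLast?_append, getLast?_eq_getLast htne]
        rfl
      rw [hgl, getLast?_eq_getLast htne]
      intro hcontra
      have hdt : s.getLastD 0 ∈ t := by
        rw [← Option.some.inj hcontra]
        exact getLast_mem htne
      have hdleft : s.getLastD 0 ∈ (gSegs P M).dropLast.flatten :=
        mem_flatten.2 ⟨s, hs, getLastD_mem s hsne⟩
      have := hLsplit ▸ hs2
      obtain ⟨-, -, hdj⟩ := nodup_append.1 this
      exact hdj _ hdleft _ hdt rfl
  · -- card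
    simp only [gMap]
    have hPairSegs := (nodup_flatten.1 hs2).2
    have hlist : ((gSegs P M).dropLast.map (·.getLastD 0)).Nodup := by
      have h1 := hPairSegs.sublist (dropLast_sublist (gSegs P M))
      have h2 : (gSegs P M).dropLast.Pairwise
          (fun a b => a.getLastD 0 ≠ b.getLastD 0) := by
        refine h1.imp_of_mem ?_
        intro a b ha hb hab heq
        have haa : a.getLastD 0 ∈ a := getLastD_mem a (hs1 a (dropLast_subset _ ha))
        have hbb : b.getLastD 0 ∈ b := getLastD_mem b (hs1 b (dropLast_subset _ hb))
        rw [heq] at haa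
        exact hab haa hbb
      exact h2.map _ (fun a b h => h)
    rw [toFinset_card_of_nodup hlist, length_map, length_dropLast]
    have : (gSegs P M).length = (gO P M).length + 1 := by simp [gSegs]
    omega

theorem fMap_gMap (m k : ℕ) (P : Finset (List ℕ)) (M : List ℕ)
    (hP : IsIOPart m k P) (hM : M ∈ P) :
    fMap m (gMap P M).1 (gMap P M).2 = (P, M) := by
  obtain ⟨hs1, hs2, hhead, hOlen, hLlen, hunion, hdisjHL, hndH, hPair⟩ :=
    gSegs_facts m k P M hP hM
  have hsegne : gSegs P M ≠ [] := cons_ne_nil _ _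
  have hsplit : splitD (gMap P M).2 (gMap P M).1 = gSegs P M := by
    show splitD _ ((gSegs P M).flatten) = _
    exact splitD_flatten _ _ hsegne hs1 hs2 (fun x _ => List.mem_toFinset)
  obtain ⟨hcard, hparts, hdisjP, hcover⟩ := hP
  have hOne : ∀ o ∈ gO P M, o ≠ [] := by
    intro o ho h
    have := (hparts o (Finset.mem_of_mem_erase (mem_gO.1 ho))).2
    rw [h] at this; simp at this
  have hcompl : Finset.Icc 1 m \ (gSegs P M).flatten.toFinset
      = ((gO P M).map List.headI).toFinset := by
    rw [← hunion]
    exact Finset.union_sdiff_cancel_left hdisjHL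
  have hsorted : ((gO P M).map List.headI).Pairwise (· ≤ ·) :=
    pairwise_map.2 (gO_sorted P M)
  have hsort : (Finset.Icc 1 m \ (gSegs P M).flatten.toFinset).sort (· ≤ ·)
      = (gO P M).map List.headI := by
    rw [hcompl]
    exact (List.toFinset_sort (· ≤ ·) hndH).2 hsorted
  have hparts_eq : fParts m (gMap P M).1 (gMap P M).2 = M :: gO P M := by
    unfold fParts
    rw [hsplit]
    have h0 : ((gMap P M).1).toFinset = (gSegs P M).flatten.toFinset := rfl
    rw [h0, hsort]
    show M :: List.zipWith List.cons ((gO P M).map List.headI)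
        ((gO P M).map List.tail) = _
    rw [zip_head_tail _ hOne]
  unfold fMap
  rw [hparts_eq, hsplit]
  show ((M :: gO P M).toFinset, M) = (P, M)
  rw [toFinset_cons, gO_toFinset, Finset.insert_erase hM]

theorem f_facts (n k : ℕ) (L : List ℕ) (D : Finset ℕ) (hn : 2 ≤ n) (hk1 : 1 ≤ k)
    (hT : IsTriple n k (L, D)) :
    L ≠ [] ∧
    (splitD D L).length = k ∧
    (∀ s ∈ splitD D L, s ≠ []) ∧
    2 ≤ (splitD D L).headI.length ∧
    (L.filter (· ∈ D)).toFinset = D ∧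
    ((Finset.Icc 1 (n + k - 1) \ L.toFinset).sort (· ≤ ·)).length = k - 1 ∧
    (fParts (n + k - 1) L D).Nodup ∧
    (fParts (n + k - 1) L D).flatten
      ~ ((Finset.Icc 1 (n + k - 1) \ L.toFinset).sort (· ≤ ·)) ++ L ∧
    (fParts (n + k - 1) L D).flatten.Nodup ∧
    (∀ p ∈ fParts (n + k - 1) L D, p ≠ []) := by
  have hnd : L.Nodup := hT.1
  have hlen : L.length = n := hT.2.1
  have hsub : L.toFinset ⊆ Finset.Icc 1 (n + k - 1) := hT.2.2.1
  have hDmid : D ⊆ ((L.drop 1).dropLast).toFinset := hT.2.2.2.1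
  have hDcard : D.card = k - 1 := hT.2.2.2.2
  have hLne : L ≠ [] := by intro h; rw [h] at hlen; simp at hlen; omega
  obtain ⟨c, t, rfl⟩ := exists_cons_of_ne_nil hLne
  set L := c :: t with hLdef
  have htne : t ≠ [] := by
    intro h
    rw [hLdef, h] at hlen
    simp at hlen
    omega
  have hmid : ((L.drop 1).dropLast) = t.dropLast := by
    rw [hLdef, drop_one, tail_cons]
  have hheadD : c ∉ D := by
    intro h
    have := List.mem_toFinset.1 (hDmid h)
    rw [hmid] at this
    exact (nodup_cons.1 hnd).1 (dropLast_subset t this)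
  have hlastD : ∀ x, L.getLast? = some x → x ∉ D := by
    intro x hx hxD
    have hgl : L.getLast? = some (t.getLast htne) := by
      rw [hLdef, getLast?_cons, getLast?_eq_getLast htne]
      rfl
    rw [hgl] at hx
    have hxval : x = t.getLast htne := (Option.some.inj hx).symm
    have := List.mem_toFinset.1 (hDmid hxD)
    rw [hmid, hxval] at this
    have h2 := getLastD_not_mem_dropLast t htne (nodup_cons.1 hnd).2
    rw [getLastD_eq_getLast t htne] at h2
    exact h2 this
  have hfilter : (L.filter (· ∈ D)).toFinset = D := by
    ext x
    simp only [List.toFinset_filter, Finset.mem_filter, decide_eq_true_eq]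
    constructor
    · exact fun h => h.2
    · intro h
      refine ⟨?_, h⟩
      have := List.mem_toFinset.1 (hDmid h)
      rw [hmid] at this
      exact List.mem_toFinset.2 (by rw [hLdef]; exact mem_cons_of_mem c (dropLast_subset t this))
  have hfillen : (L.filter (· ∈ D)).length = k - 1 := by
    rw [← toFinset_card_of_nodup (hnd.filter _), hfilter, hDcard]
  have hslen : (splitD D L).length = k := by
    have h1 := congrArg List.length (splitD_lasts D L)
    rw [length_map, length_dropLast, hfillen] at h1
    have h2 : splitD D L ≠ [] := splitD_ne_nil D L
    have h3 : 1 ≤ (splitD D L).length := length_pos_iff.2 h2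
    omega
  have hsegsne : ∀ s ∈ splitD D L, s ≠ [] := splitD_segs_ne_nil D L hLne hlastD
  have hheadlen : 2 ≤ (splitD D L).headI.length := splitD_headI_len D c t htne hheadD
  have hDL : D ⊆ L.toFinset := by
    intro x hx
    have := List.mem_toFinset.1 (hDmid hx)
    rw [hmid] at this
    exact List.mem_toFinset.2 (mem_cons_of_mem c (dropLast_subset t this))
  set cs := (Finset.Icc 1 (n + k - 1) \ L.toFinset).sort (· ≤ ·) with hcsdef
  have hcs_len : cs.length = k - 1 := by
    rw [hcsdef, Finset.length_sort, Finset.card_sdiff_of_subset hsub, Nat.card_Icc,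
      toFinset_card_of_nodup hnd, hlen]
    omega
  have hcs_mem : ∀ x ∈ cs, x ∉ L := by
    intro x hx hxL
    have := Finset.mem_sort (α := ℕ) (· ≤ ·) |>.1 hx
    rw [Finset.mem_sdiff] at this
    exact this.2 (List.mem_toFinset.2 hxL)
  have hcsL_nd : (cs ++ L).Nodup := by
    rw [nodup_append]
    exact ⟨Finset.sort_nodup _ _, hnd, fun x hx y hy hxy => hcs_mem x hx (hxy ▸ hy)⟩
  have htail_len : (splitD D L).tail.length = k - 1 := by
    rw [length_tail, hslen]
  have hperm : (fParts (n + k - 1) L D).flatten ~ cs ++ L := by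
    unfold fParts
    rw [flatten_cons]
    have hz := zip_flatten_perm cs (splitD D L).tail (by rw [hcs_len, htail_len])
    calc (splitD D L).headI ++ (List.zipWith List.cons cs (splitD D L).tail).flatten
        ~ (splitD D L).headI ++ (cs ++ (splitD D L).tail.flatten) :=
          Perm.append_left _ hz
      _ ~ cs ++ ((splitD D L).headI ++ (splitD D L).tail.flatten) :=
          perm_append_comm_assoc _ _ _
      _ = cs ++ L := by
          rw [← flatten_cons, headI_cons_tail _ (splitD_ne_nil D L), flatten_splitD]
  have hfl_nd : (fParts (n + k - 1) L D).flatten.Nodup := hperm.nodup_iff.2 hcsL_nd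
  have hpne : ∀ p ∈ fParts (n + k - 1) L D, p ≠ [] := by
    intro p hp
    rcases mem_cons.1 hp with rfl | hp
    · exact splitD_headI_ne_nil D L hLne
    · obtain ⟨c', s', _, _, rfl⟩ := mem_zip_cons hp
      exact cons_ne_nil _ _
  have hplnd : (fParts (n + k - 1) L D).Nodup := by
    have hPairw := (nodup_flatten.1 hfl_nd).2
    refine hPairw.imp_of_mem ?_
    intro a b ha hb hab
    intro heq
    subst heq
    have hane : a ≠ [] := hpne a ha
    obtain ⟨y, ys, rfl⟩ := exists_cons_of_ne_nil hane
    exact hab mem_cons_self mem_cons_self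
  exact ⟨hLne, hslen, hsegsne, hheadlen, hfilter, hcs_len, hplnd, hperm, hfl_nd, hpne⟩

theorem fMap_isIOPart (n k : ℕ) (L : List ℕ) (D : Finset ℕ) (hn : 2 ≤ n) (hk1 : 1 ≤ k)
    (hT : IsTriple n k (L, D)) :
    IsIOPart (n + k - 1) k (fMap (n + k - 1) L D).1 ∧
      (fMap (n + k - 1) L D).2 ∈ (fMap (n + k - 1) L D).1 := by
  obtain ⟨hLne, hslen, hsegsne, hheadlen, hfilter, hcs_len, hplnd, hperm, hfl_nd, hpne⟩ :=
    f_facts n k L D hn hk1 hT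
  have hsub : L.toFinset ⊆ Finset.Icc 1 (n + k - 1) := hT.2.2.1
  have hfst : (fMap (n + k - 1) L D).1 = (fParts (n + k - 1) L D).toFinset := rfl
  refine ⟨⟨?_, ?_, ?_, ?_⟩, ?_⟩
  · -- card
    rw [hfst, toFinset_card_of_nodup hplnd]
    unfold fParts
    rw [length_cons, length_zipWith, hcs_len, length_tail, hslen]
    omega
  · -- parts
    intro l hl
    rw [hfst, List.mem_toFinset] at hl
    refine ⟨(nodup_flatten.1 hfl_nd).1 l hl, ?_⟩
    rcases mem_cons.1 hl with rfl | hl'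
    · exact hheadlen
    · obtain ⟨c', s', _, hs', rfl⟩ := mem_zip_cons hl'
      have : s' ≠ [] := hsegsne s' (mem_of_mem_tail hs')
      have := length_pos_iff.2 this
      simp only [length_cons]
      omega
  · -- disjoint
    intro l hl l' hl' hne x hx hx'
    rw [hfst, List.mem_toFinset] at hl hl'
    have hPairw := (nodup_flatten.1 hfl_nd).2
    have hsymm : Symmetric (List.Disjoint (α := ℕ)) := by
      intro a b h y h1 h2
      exact h h2 h1
    haveI : Std.Symm (List.Disjoint (α := ℕ)) := ⟨fun a b h => hsymm h⟩
    exact (hPairw.forall hl hl' hne) hx hx'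
  · -- cover
    intro x
    rw [hfst]
    have h1 : (∃ l ∈ (fParts (n + k - 1) L D).toFinset, x ∈ l)
        ↔ x ∈ (fParts (n + k - 1) L D).flatten := by
      simp only [List.mem_toFinset, mem_flatten]
    rw [h1, hperm.mem_iff, mem_append]
    have h2 : x ∈ (Finset.Icc 1 (n + k - 1) \ L.toFinset).sort (· ≤ ·)
        ↔ (x ∈ Finset.Icc 1 (n + k - 1) ∧ x ∉ L.toFinset) := by
      rw [Finset.mem_sort, Finset.mem_sdiff]
    rw [h2]
    constructor
    · intro hx
      by_cases hxL : x ∈ L.toFinset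
      · exact Or.inr (List.mem_toFinset.1 hxL)
      · exact Or.inl ⟨hx, hxL⟩
    · rintro (⟨hx, -⟩ | hx)
      · exact hx
      · exact hsub (List.mem_toFinset.2 hx)
  · -- marked part is a member
    rw [hfst]
    exact List.mem_toFinset.2 mem_cons_self

theorem gMap_fMap (n k : ℕ) (L : List ℕ) (D : Finset ℕ) (hn : 2 ≤ n) (hk1 : 1 ≤ k)
    (hT : IsTriple n k (L, D)) :
    gMap (fMap (n + k - 1) L D).1 (fMap (n + k - 1) L D).2 = (L, D) := by
  obtain ⟨hLne, hslen, hsegsne, hheadlen, hfilter, hcs_len, hplnd, hperm, hfl_nd, hpne⟩ :=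
    f_facts n k L D hn hk1 hT
  set m := n + k - 1 with hmdef
  set cs := (Finset.Icc 1 m \ L.toFinset).sort (· ≤ ·) with hcsdef
  set Z := List.zipWith List.cons cs (splitD D L).tail with hZdef
  have hplZ : fParts m L D = (splitD D L).headI :: Z := rfl
  have hM_notZ : (splitD D L).headI ∉ Z := by
    rw [hplZ] at hplnd
    exact (nodup_cons.1 hplnd).1
  have hZnd : Z.Nodup := by
    rw [hplZ] at hplnd
    exact (nodup_cons.1 hplnd).2
  have herase : (fMap m L D).1.erase (fMap m L D).2 = Z.toFinset := by
    show (fParts m L D).toFinset.erase ((splitD D L).headI) = _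
    rw [hplZ, toFinset_cons]
    exact Finset.erase_insert (fun h => hM_notZ (List.mem_toFinset.1 h))
  have hlenZ : cs.length = (splitD D L).tail.length := by
    rw [hcs_len, length_tail, hslen]
  have hmapheads : Z.map List.headI = cs := map_headI_zip _ _ hlenZ
  have hcs_sortedlt : cs.Pairwise (· < ·) :=
    List.sortedLT_iff_pairwise.1 ((List.sortedLE_iff_pairwise.2
      (Finset.pairwise_sort _ _)).sortedLT_of_nodup (Finset.sort_nodup _ _))
  have hZlt : Z.Pairwise (fun a b => a.headI < b.headI) := by
    have h := hmapheads ▸ hcs_sortedlt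
    exact pairwise_map.1 h
  have hgOperm : gO (fMap m L D).1 (fMap m L D).2 ~ Z := by
    refine (gO_perm _ _).trans ?_
    rw [herase]
    exact List.toFinset_toList hZnd
  have hgOlt : (gO (fMap m L D).1 (fMap m L D).2).Pairwise
      (fun a b => a.headI < b.headI) := by
    have hndheads : ((gO (fMap m L D).1 (fMap m L D).2).map List.headI).Nodup := by
      have h : (gO (fMap m L D).1 (fMap m L D).2).map List.headI ~ Z.map List.headI :=
        hgOperm.map _
      rw [hmapheads] at h
      exact h.nodup_iff.2 (Finset.sort_nodup _ _)
    have hsorted_le : ((gO (fMap m L D).1 (fMap m L D).2).map List.headI).Pairwise (· ≤ ·) :=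
      pairwise_map.2 (gO_sorted _ _)
    exact pairwise_map.1 (List.sortedLT_iff_pairwise.1
      ((List.sortedLE_iff_pairwise.2 hsorted_le).sortedLT_of_nodup hndheads))
  have hgOZ : gO (fMap m L D).1 (fMap m L D).2 = Z :=
    sorted_unique _ _ hgOperm hgOlt hZlt
  have hsegs : gSegs (fMap m L D).1 (fMap m L D).2 = splitD D L := by
    unfold gSegs
    rw [hgOZ, hZdef, map_tail_zip _ _ hlenZ]
    show (splitD D L).headI :: (splitD D L).tail = _
    exact headI_cons_tail _ (splitD_ne_nil D L)
  unfold gMap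
  rw [hsegs, flatten_splitD, splitD_lasts, hfilter]

end Stmt5

/-- Bijection between distinguished internally ordered `k`-partitions of
`{1,...,n+k-1}` and triples `(I, σ, D)`. -/
theorem stmt5 (n k : ℕ) (hn : 2 ≤ n) (hk1 : 1 ≤ k) (hk : k ≤ n - 1) :
    Nonempty ({p : Finset (List ℕ) × List ℕ //
        IsIOPart (n + k - 1) k p.1 ∧ p.2 ∈ p.1} ≃
      {p : List ℕ × Finset ℕ // IsTriple n k p}) := by
  refine ⟨{
    toFun := fun p => ⟨Stmt5.gMap p.1.1 p.1.2,
      Stmt5.gMap_isTriple n k p.1.1 p.1.2 hn hk1 p.2.1 p.2.2⟩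
    invFun := fun t => ⟨Stmt5.fMap (n + k - 1) t.1.1 t.1.2,
      Stmt5.fMap_isIOPart n k t.1.1 t.1.2 hn hk1 t.2⟩
    left_inv := ?_
    right_inv := ?_ }⟩
  · rintro ⟨⟨P, M⟩, hPM⟩
    exact Subtype.ext (Stmt5.fMap_gMap (n + k - 1) k P M hPM.1 hPM.2)
  · rintro ⟨⟨L, D⟩, hLD⟩
    exact Subtype.ext (Stmt5.gMap_fMap n k L D hn hk1 hLD)
end

section
/- For integers n ≥ 2 and 1 ≤ k ≤ n-1, the number of rooted trees with k internal vertices (including the root, each internal vertex having at least two children) and n labelled leaves equals the number of partitions of {1,...,n+k-1} into k blocks each of size ≥ 2. -/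
/- Rooted trees with `n` labelled leaves and `k` internal vertices (each with ≥ 2
children) correspond bijectively to nested sets in `S₂(n,k)` (each internal vertex
is identified with the set of labels of its descendant leaves), so we count them
via this canonical representation. -/

/-- A nested set of `P₂({1,...,n})` with `k` elements. -/
def IsNested2 (n k : ℕ) (S : Finset (Finset ℕ)) : Prop :=
  S.card = k ∧ Finset.Icc 1 n ∈ S ∧
  (∀ A ∈ S, A ⊆ Finset.Icc 1 n ∧ 2 ≤ A.card) ∧
  (∀ A ∈ S, ∀ B ∈ S, A ⊆ B ∨ B ⊆ A ∨ Disjoint A B)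

/-- A partition of `{1,...,m}` into `k` blocks, each of cardinality ≥ 2. -/
def IsPart2 (m k : ℕ) (P : Finset (Finset ℕ)) : Prop :=
  P.card = k ∧ (∀ A ∈ P, 2 ≤ A.card) ∧
  (∀ A ∈ P, ∀ B ∈ P, A ≠ B → Disjoint A B) ∧
  P.biUnion id = Finset.Icc 1 m
namespace Stmt15

open Finset

noncomputable def Tc (n k : ℕ) : ℕ := Nat.card {S : Finset (Finset ℕ) // IsNested2 n k S}
noncomputable def Pc (m k : ℕ) : ℕ := Nat.card {P : Finset (Finset ℕ) // IsPart2 m k P}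

lemma finite_nested (n k : ℕ) (q : Finset (Finset ℕ) → Prop) :
    Finite {S : Finset (Finset ℕ) // IsNested2 n k S ∧ q S} := by
  have h : {S : Finset (Finset ℕ) | IsNested2 n k S ∧ q S}.Finite := by
    apply Set.Finite.subset (Finset.finite_toSet ((Icc 1 n).powerset.powerset))
    intro S hS
    simp only [coe_powerset, Set.mem_preimage, Set.mem_powerset_iff, mem_coe, mem_powerset]
    intro A hA
    exact (hS.1.2.2.1 A hA).1
  exact h.to_subtype

lemma finite_nested' (n k : ℕ) : Finite {S : Finset (Finset ℕ) // IsNested2 n k S} := by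
  have := finite_nested n k (fun _ => True)
  exact Finite.of_equiv {S // IsNested2 n k S ∧ True} (Equiv.subtypeEquivRight (fun S => by tauto))

lemma finite_part (m k : ℕ) (q : Finset (Finset ℕ) → Prop) :
    Finite {P : Finset (Finset ℕ) // IsPart2 m k P ∧ q P} := by
  have h : {P : Finset (Finset ℕ) | IsPart2 m k P ∧ q P}.Finite := by
    apply Set.Finite.subset (Finset.finite_toSet ((Icc 1 m).powerset.powerset))
    intro P hP
    simp only [coe_powerset, Set.mem_preimage, Set.mem_powerset_iff, mem_coe, mem_powerset]
    intro A hA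
    rw [← hP.1.2.2.2]
    exact fun x hx => Finset.mem_biUnion.2 ⟨A, hA, hx⟩
  exact h.to_subtype

lemma finite_part' (m k : ℕ) : Finite {P : Finset (Finset ℕ) // IsPart2 m k P} := by
  have := finite_part m k (fun _ => True)
  exact Finite.of_equiv {P // IsPart2 m k P ∧ True} (Equiv.subtypeEquivRight (fun P => by tauto))

/-- split a count by a predicate -/
lemma card_split {α : Type*} (p q : α → Prop) [Finite {x // p x}] :
    Nat.card {x // p x} = Nat.card {x // p x ∧ q x} + Nat.card {x // p x ∧ ¬ q x} := by
  classical
  have e : {x // p x ∧ q x} ⊕ {x // p x ∧ ¬ q x} ≃ {x // p x} :=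
    { toFun := Sum.elim (fun a => ⟨a.1, a.2.1⟩) (fun a => ⟨a.1, a.2.1⟩)
      invFun := fun a => if h : q a.1 then .inl ⟨a.1, a.2, h⟩ else .inr ⟨a.1, a.2, h⟩
      left_inv := by rintro (⟨a, ha, hq⟩ | ⟨a, ha, hq⟩) <;> simp [hq]
      right_inv := by rintro ⟨a, ha⟩; by_cases h : q a <;> simp [h] }
  have f1 : Finite {x // p x ∧ q x} := Finite.of_injective (fun a => (⟨a.1, a.2.1⟩ : {x // p x})) (by rintro ⟨a,_⟩ ⟨b,_⟩ h; simpa using congrArg Subtype.val h)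
  have f2 : Finite {x // p x ∧ ¬ q x} := Finite.of_injective (fun a => (⟨a.1, a.2.1⟩ : {x // p x})) (by rintro ⟨a,_⟩ ⟨b,_⟩ h; simpa using congrArg Subtype.val h)
  rw [← Nat.card_congr e, Nat.card_sum]

lemma card_sigma_const {ι : Type*} [Finite ι] (f : ι → Type*) [∀ i, Finite (f i)] (c : ℕ)
    (h : ∀ i, Nat.card (f i) = c) : Nat.card (Σ i, f i) = c * Nat.card ι := by
  classical
  have : Fintype ι := Fintype.ofFinite ι
  have : ∀ i, Fintype (f i) := fun i => Fintype.ofFinite _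
  rw [Nat.card_eq_fintype_card, Fintype.card_sigma, Nat.card_eq_fintype_card]
  rw [Finset.sum_congr rfl (fun i _ => by rw [← Nat.card_eq_fintype_card, h i])]
  simp [mul_comm]

def caseA (N : ℕ) (S : Finset (Finset ℕ)) : Prop := ∃ j, j ≠ N ∧ {N, j} ∈ S
def caseB (N : ℕ) (S : Finset (Finset ℕ)) : Prop := ∃ B, B ∈ S ∧ N ∉ B ∧ insert N B ∈ S

section helpers
variable {N k : ℕ} {S : Finset (Finset ℕ)}

lemma image_left_inv_eq {α : Type*} [DecidableEq α] (s : Finset α) (f g : α → α)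
    (h : ∀ x ∈ s, g (f x) = x) : (s.image f).image g = s := by
  rw [Finset.image_image]
  calc s.image (g ∘ f) = s.image id := Finset.image_congr (fun x hx => h x hx)
  _ = s := Finset.image_id

lemma card_image_left_inv {α : Type*} [DecidableEq α] (s : Finset α) (f g : α → α)
    (h : ∀ x ∈ s, g (f x) = x) : (s.image f).card = s.card := by
  refine le_antisymm Finset.card_image_le ?_
  conv_lhs => rw [← image_left_inv_eq s f g h]
  exact Finset.card_image_le

lemma chain (hS : IsNested2 N k S) {C D : Finset ℕ} (hC : C ∈ S) (hD : D ∈ S) {x : ℕ}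
    (hxC : x ∈ C) (hxD : x ∈ D) : C ⊆ D ∨ D ⊆ C := by
  rcases hS.2.2.2 C hC D hD with h | h | h
  · exact Or.inl h
  · exact Or.inr h
  · exact absurd hxD (Finset.disjoint_left.mp h hxC)

lemma pair_ne_of_mem (hS : IsNested2 N k S) {j : ℕ} (h : {N, j} ∈ S) : j ≠ N := by
  rintro rfl
  have := (hS.2.2.1 _ h).2
  simp at this

lemma min_pair (hS : IsNested2 N k S) {j : ℕ} {C : Finset ℕ} (hp : {N, j} ∈ S) (hC : C ∈ S)
    (hNC : N ∈ C) : {N, j} ⊆ C := by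
  rcases chain hS hp hC (Finset.mem_insert_self N {j}) hNC with h | h
  · exact h
  · have h2 : 2 ≤ C.card := (hS.2.2.1 C hC).2
    have hle : ({N, j} : Finset ℕ).card ≤ 2 :=
      le_trans (Finset.card_insert_le _ _) (by simp)
    have : C = {N, j} := Finset.eq_of_subset_of_card_le h (le_trans hle h2)
    exact this ▸ Finset.Subset.rfl

lemma uniq_pair (hS : IsNested2 N k S) {j₁ j₂ : ℕ} (h1 : {N, j₁} ∈ S) (h2 : {N, j₂} ∈ S) :
    j₁ = j₂ := by
  have hsub := min_pair hS h1 h2 (Finset.mem_insert_self N {j₂})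
  have hj1 : j₁ ∈ ({N, j₂} : Finset ℕ) := hsub (by simp)
  rcases Finset.mem_insert.mp hj1 with h | h
  · exact absurd h (pair_ne_of_mem hS h1)
  · simpa using h

lemma insert_min (hS : IsNested2 N k S) {B C : Finset ℕ} (hB : B ∈ S) (hiB : insert N B ∈ S)
    (hNB : N ∉ B) (hC : C ∈ S) (hNC : N ∈ C) : insert N B ⊆ C := by
  rcases chain hS hiB hC (Finset.mem_insert_self N B) hNC with h | h
  · exact h
  · rcases hS.2.2.2 C hC B hB with h1 | h1 | h1
    · exact absurd (h1 hNC) hNB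
    · exact Finset.insert_subset hNC h1
    · exfalso
      have hsub : C ⊆ {N} := by
        intro x hx
        rcases Finset.mem_insert.mp (h hx) with h2 | h2
        · simp [h2]
        · exact absurd h2 (Finset.disjoint_left.mp h1 hx)
      have := Finset.card_le_card hsub
      have h2 : 2 ≤ C.card := (hS.2.2.1 C hC).2
      simp at this; omega

lemma uniq_insert (hS : IsNested2 N k S) {B₁ B₂ : Finset ℕ} (hB1 : B₁ ∈ S)
    (hiB1 : insert N B₁ ∈ S) (hN1 : N ∉ B₁) (hB2 : B₂ ∈ S) (hiB2 : insert N B₂ ∈ S)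
    (hN2 : N ∉ B₂) : B₁ = B₂ := by
  have e1 := insert_min hS hB1 hiB1 hN1 hiB2 (Finset.mem_insert_self N B₂)
  have e2 := insert_min hS hB2 hiB2 hN2 hiB1 (Finset.mem_insert_self N B₁)
  have : insert N B₁ = insert N B₂ := le_antisymm e1 e2
  calc B₁ = (insert N B₁).erase N := (Finset.erase_insert hN1).symm
  _ = (insert N B₂).erase N := by rw [this]
  _ = B₂ := Finset.erase_insert hN2

lemma notB_of_A (hS : IsNested2 N k S) (hA : caseA N S) : ¬ caseB N S := by
  obtain ⟨j, hjne, hp⟩ := hA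
  rintro ⟨B, hB, hNB, hiB⟩
  have hsub := min_pair hS hp hiB (Finset.mem_insert_self N B)
  have hjB : j ∈ B := by
    have := hsub (by simp : j ∈ ({N, j} : Finset ℕ))
    rcases Finset.mem_insert.mp this with h | h
    · exact absurd h hjne
    · exact h
  rcases hS.2.2.2 _ hp B hB with h1 | h1 | h1
  · exact hNB (h1 (Finset.mem_insert_self N {j}))
  · have hsub2 : B ⊆ {j} := by
      intro x hx
      rcases Finset.mem_insert.mp (h1 hx) with h2 | h2
      · exact absurd (h2 ▸ hx) hNB
      · simp [h2]
    have := Finset.card_le_card hsub2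
    have h2 : 2 ≤ B.card := (hS.2.2.1 B hB).2
    simp at this; omega
  · exact absurd hjB (Finset.disjoint_left.mp h1 (by simp))

lemma mem_N_of_mem_j (hS : IsNested2 N k S) {j : ℕ} {D : Finset ℕ} (hp : {N, j} ∈ S)
    (hD : D ∈ S) (hjD : j ∈ D) (hne : D ≠ {N, j}) : N ∈ D := by
  rcases chain hS hp hD (by simp : j ∈ ({N, j} : Finset ℕ)) hjD with h | h
  · exact h (Finset.mem_insert_self N {j})
  · exfalso
    have h2 : 2 ≤ D.card := (hS.2.2.1 D hD).2
    have hle : ({N, j} : Finset ℕ).card ≤ 2 :=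
      le_trans (Finset.card_insert_le _ _) (by simp)
    exact hne (Finset.eq_of_subset_of_card_le h (le_trans hle h2))

lemma mem_N_of_ssupset (hS : IsNested2 N k S) {B D : Finset ℕ} (hB : B ∈ S)
    (hiB : insert N B ∈ S) (hNB : N ∉ B) (hD : D ∈ S) (hBD : B ⊂ D) : N ∈ D := by
  by_contra hN
  obtain ⟨x, hx⟩ : B.Nonempty := Finset.card_pos.mp (by have := (hS.2.2.1 B hB).2; omega)
  rcases hS.2.2.2 _ hiB D hD with h | h | h
  · exact hN (h (Finset.mem_insert_self N B))
  · have hDB : D ⊆ B := by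
      intro y hy
      rcases Finset.mem_insert.mp (h hy) with h2 | h2
      · exact absurd (h2 ▸ hy) hN
      · exact h2
    exact (ssubset_irrefl B) (lt_of_lt_of_le hBD hDB)
  · exact absurd (hBD.1 hx) (Finset.disjoint_left.mp h (Finset.mem_insert_of_mem hx))

lemma pair_eq_of_card_two {A : Finset ℕ} (hNA : N ∈ A)
    (h2 : A.card = 2) : ∃ j, j ≠ N ∧ A = {N, j} := by
  obtain ⟨x, y, hxy, rfl⟩ := Finset.card_eq_two.mp h2
  rcases Finset.mem_insert.mp hNA with h | h
  · subst h
    exact ⟨y, fun h => hxy h.symm, rfl⟩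
  · simp only [Finset.mem_singleton] at h
    subst h
    exact ⟨x, fun h => hxy h, by rw [Finset.pair_comm]⟩

end helpers
lemma Tc_zero (n : ℕ) : Tc n 0 = 0 := by
  have : IsEmpty {S : Finset (Finset ℕ) // IsNested2 n 0 S} := by
    constructor; rintro ⟨S, hc, hr, -⟩
    rw [Finset.card_eq_zero] at hc
    simp [hc] at hr
  exact Nat.card_of_isEmpty

lemma Pc_zero (m : ℕ) (hm : 1 ≤ m) : Pc m 0 = 0 := by
  have : IsEmpty {P : Finset (Finset ℕ) // IsPart2 m 0 P} := by
    constructor; rintro ⟨P, hc, -, -, hu⟩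
    rw [Finset.card_eq_zero] at hc
    subst hc
    simp only [Finset.biUnion_empty] at hu
    have : (1:ℕ) ∈ Finset.Icc 1 m := by simp [hm]
    rw [← hu] at this; simp at this
  exact Nat.card_of_isEmpty

lemma Tc_two_one : Tc 2 1 = 1 := by
  have hN : IsNested2 2 1 {Finset.Icc 1 2} := by
    refine ⟨by simp, by simp, ?_, ?_⟩
    · intro A hA; simp only [mem_singleton] at hA; subst hA
      exact ⟨subset_rfl, by simp⟩
    · intro A hA B hB; simp only [mem_singleton] at hA hB; subst hA; subst hB; left; rfl
  have : Unique {S : Finset (Finset ℕ) // IsNested2 2 1 S} := by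
    refine ⟨⟨⟨{Finset.Icc 1 2}, hN⟩⟩, ?_⟩
    rintro ⟨S, hc, hr, -⟩
    obtain ⟨a, rfl⟩ := Finset.card_eq_one.mp hc
    simp only [mem_singleton] at hr
    simp [hr]
  exact Nat.card_unique

lemma Pc_two_one : Pc 2 1 = 1 := by
  have hN : IsPart2 2 1 {Finset.Icc 1 2} := by
    refine ⟨by simp, ?_, ?_, by simp⟩
    · intro A hA; simp only [mem_singleton] at hA; subst hA; simp
    · intro A hA B hB h; simp only [mem_singleton] at hA hB; subst hA; subst hB; simp at h
  have : Unique {P : Finset (Finset ℕ) // IsPart2 2 1 P} := by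
    refine ⟨⟨⟨{Finset.Icc 1 2}, hN⟩⟩, ?_⟩
    rintro ⟨P, hc, h2, hd, hu⟩
    obtain ⟨a, rfl⟩ := Finset.card_eq_one.mp hc
    simp only [Finset.singleton_biUnion, id] at hu
    simp [hu]
  exact Nat.card_unique

lemma Tc_two (k : ℕ) (hk : 2 ≤ k) : Tc 2 k = 0 := by
  have : IsEmpty {S : Finset (Finset ℕ) // IsNested2 2 k S} := by
    constructor; rintro ⟨S, hc, hr, hs, -⟩
    have hsub : S ⊆ {Finset.Icc 1 2} := by
      intro A hA
      obtain ⟨h1, h2⟩ := hs A hA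
      rw [mem_singleton]
      have : (Finset.Icc 1 2).card = 2 := by simp
      apply Finset.eq_of_subset_of_card_le h1 (by omega)
    have := Finset.card_le_card hsub
    simp [hc] at this; omega
  exact Nat.card_of_isEmpty

lemma Pc_small (m k : ℕ) (h : m < 2 * k) : Pc m k = 0 := by
  have : IsEmpty {P : Finset (Finset ℕ) // IsPart2 m k P} := by
    constructor; rintro ⟨P, hc, h2, hd, hu⟩
    have hcard : (P.biUnion id).card = ∑ A ∈ P, A.card :=
      Finset.card_biUnion hd
    have h1 : (P.biUnion id).card = m := by rw [hu]; simp
    have h3 : ∑ A ∈ P, A.card ≥ ∑ A ∈ P, 2 := Finset.sum_le_sum h2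
    simp [Finset.sum_const, hc] at h3
    omega
  exact Nat.card_of_isEmpty
section treeRec

lemma Icc_succ_top (n : ℕ) : Finset.Icc 1 (n+1) = insert (n+1) (Finset.Icc 1 n) := by
  ext x; simp [Nat.lt_succ_iff]; omega

lemma not_mem_Icc_self (n : ℕ) : (n+1) ∉ Finset.Icc 1 n := by simp

variable {n k' : ℕ}

/-- the insertion map for trees -/
noncomputable def F (n j : ℕ) (C : Finset ℕ) : Finset ℕ :=
  if j ∈ C then insert (n+1) C else C

lemma Fwd {j : ℕ} (hj : j ∈ Finset.Icc 1 n) {k' : ℕ} {S' : Finset (Finset ℕ)}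
    (hS' : IsNested2 n k' S') :
    IsNested2 (n+1) (k'+1) (insert {n+1, j} (S'.image (F n j))) ∧
      caseA (n+1) (insert {n+1, j} (S'.image (F n j))) := by
  classical
  have hjn : j ≠ n + 1 := by simp at hj; omega
  have hj1 : 1 ≤ j ∧ j ≤ n := by simpa using hj
  have hnm : ∀ C ∈ S', (n+1) ∉ C := fun C hC h => not_mem_Icc_self n ((hS'.2.2.1 C hC).1 h)
  have hrec : ∀ C ∈ S', (F n j C).erase (n+1) = C := by
    intro C hC
    unfold F
    by_cases h : j ∈ C <;>
      simp [h, Finset.erase_insert (hnm C hC), Finset.erase_eq_of_notMem (hnm C hC)]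
  have hTcard : (S'.image (F n j)).card = k' := by
    rw [card_image_left_inv S' (F n j) (fun C => C.erase (n+1)) hrec, hS'.1]
  have hpairnotT : ({n+1, j} : Finset ℕ) ∉ S'.image (F n j) := by
    intro h
    obtain ⟨C, hC, hFC⟩ := Finset.mem_image.mp h
    have h1 := hrec C hC
    rw [hFC] at h1
    rw [Finset.erase_insert (by simp [Ne.symm hjn])] at h1
    have := (hS'.2.2.1 C hC).2
    rw [← h1] at this
    simp at this
  have hVcard : (insert {n+1, j} (S'.image (F n j))).card = k' + 1 := by
    rw [Finset.card_insert_of_notMem hpairnotT, hTcard]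
  have hroot : Finset.Icc 1 (n+1) ∈ insert {n+1, j} (S'.image (F n j)) := by
    have : F n j (Finset.Icc 1 n) = Finset.Icc 1 (n+1) := by
      unfold F
      rw [if_pos hj, Icc_succ_top]
    exact Finset.mem_insert_of_mem (Finset.mem_image.mpr ⟨_, hS'.2.1, this⟩)
  have hFmono : ∀ C₁ C₂ : Finset ℕ, C₁ ⊆ C₂ → F n j C₁ ⊆ F n j C₂ := by
    intro C₁ C₂ hsub
    unfold F
    by_cases h1 : j ∈ C₁
    · rw [if_pos h1, if_pos (hsub h1)]
      exact Finset.insert_subset_insert _ hsub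
    · rw [if_neg h1]
      by_cases h2 : j ∈ C₂
      · rw [if_pos h2]; exact hsub.trans (Finset.subset_insert _ _)
      · rw [if_neg h2]; exact hsub
  have hFdis : ∀ C₁ ∈ S', ∀ C₂ ∈ S', Disjoint C₁ C₂ → Disjoint (F n j C₁) (F n j C₂) := by
    intro C₁ hC1 C₂ hC2 hdis
    unfold F
    by_cases h1 : j ∈ C₁
    · have h2 : j ∉ C₂ := Finset.disjoint_left.mp hdis h1
      rw [if_pos h1, if_neg h2]
      rw [Finset.disjoint_insert_left]
      exact ⟨hnm C₂ hC2, hdis⟩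
    · rw [if_neg h1]
      by_cases h2 : j ∈ C₂
      · rw [if_pos h2, Finset.disjoint_insert_right]
        exact ⟨hnm C₁ hC1, hdis⟩
      · rw [if_neg h2]; exact hdis
  refine ⟨⟨hVcard, hroot, ?_, ?_⟩, ⟨j, hjn, Finset.mem_insert_self _ _⟩⟩
  · -- bounds
    intro A hA
    rcases Finset.mem_insert.mp hA with rfl | hA
    · constructor
      · intro x hx
        rcases Finset.mem_insert.mp hx with rfl | hx
        · simp
        · simp only [Finset.mem_singleton] at hx
          subst hx
          simp; omega
      · rw [Finset.card_insert_of_notMem (by simp [Ne.symm hjn])]; simp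
    · obtain ⟨C, hC, rfl⟩ := Finset.mem_image.mp hA
      obtain ⟨hCsub, hCcard⟩ := hS'.2.2.1 C hC
      constructor
      · unfold F
        by_cases h : j ∈ C
        · rw [if_pos h, Icc_succ_top]
          exact Finset.insert_subset_insert _ hCsub
        · rw [if_neg h]
          exact hCsub.trans (by rw [Icc_succ_top]; exact Finset.subset_insert _ _)
      · unfold F
        by_cases h : j ∈ C
        · rw [if_pos h]
          exact le_trans hCcard (Finset.card_le_card (Finset.subset_insert _ _))
        · rw [if_neg h]; exact hCcard
  · -- nestedness
    intro A hA B hB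
    rcases Finset.mem_insert.mp hA with rfl | hA
    · rcases Finset.mem_insert.mp hB with rfl | hB
      · exact Or.inl Finset.Subset.rfl
      · obtain ⟨C, hC, rfl⟩ := Finset.mem_image.mp hB
        by_cases h : j ∈ C
        · left
          unfold F; rw [if_pos h]
          intro x hx
          rcases Finset.mem_insert.mp hx with rfl | hx
          · exact Finset.mem_insert_self _ _
          · simp only [Finset.mem_singleton] at hx; subst hx
            exact Finset.mem_insert_of_mem h
        · right; right
          unfold F; rw [if_neg h]
          rw [Finset.disjoint_left]
          intro x hx
          rcases Finset.mem_insert.mp hx with rfl | hx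
          · exact hnm C hC
          · simp only [Finset.mem_singleton] at hx; subst hx; exact h
    · rcases Finset.mem_insert.mp hB with rfl | hB
      · obtain ⟨C, hC, rfl⟩ := Finset.mem_image.mp hA
        by_cases h : j ∈ C
        · right; left
          unfold F; rw [if_pos h]
          intro x hx
          rcases Finset.mem_insert.mp hx with rfl | hx
          · exact Finset.mem_insert_self _ _
          · simp only [Finset.mem_singleton] at hx; subst hx
            exact Finset.mem_insert_of_mem h
        · right; right
          unfold F; rw [if_neg h]
          rw [Finset.disjoint_right]
          intro x hx
          rcases Finset.mem_insert.mp hx with rfl | hx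
          · exact hnm C hC
          · simp only [Finset.mem_singleton] at hx; subst hx; exact h
      · obtain ⟨C₁, hC1, rfl⟩ := Finset.mem_image.mp hA
        obtain ⟨C₂, hC2, rfl⟩ := Finset.mem_image.mp hB
        rcases hS'.2.2.2 C₁ hC1 C₂ hC2 with h | h | h
        · exact Or.inl (hFmono _ _ h)
        · exact Or.inr (Or.inl (hFmono _ _ h))
        · exact Or.inr (Or.inr (hFdis _ hC1 _ hC2 h))

end treeRec
section treeRecA
variable {n k' : ℕ}

lemma nmem_of_nested {S' : Finset (Finset ℕ)} (hS' : IsNested2 n k' S') :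
    ∀ C ∈ S', (n+1) ∉ C := fun C hC h => not_mem_Icc_self n ((hS'.2.2.1 C hC).1 h)

lemma F_erase_eq {j : ℕ} {C : Finset ℕ} (hC : (n+1) ∉ C) : (F n j C).erase (n+1) = C := by
  unfold F
  by_cases h : j ∈ C <;>
    simp [h, Finset.erase_insert hC, Finset.erase_eq_of_notMem hC]

lemma image_F_erase {j : ℕ} {S' : Finset (Finset ℕ)} (hS' : IsNested2 n k' S') :
    (S'.image (F n j)).image (fun C => C.erase (n+1)) = S' :=
  image_left_inv_eq S' (F n j) _ (fun C hC => F_erase_eq (nmem_of_nested hS' C hC))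

lemma card_image_F {j : ℕ} {S' : Finset (Finset ℕ)} (hS' : IsNested2 n k' S') :
    (S'.image (F n j)).card = k' := by
  rw [card_image_left_inv S' (F n j) (fun C => C.erase (n+1))
    (fun C hC => F_erase_eq (nmem_of_nested hS' C hC)), hS'.1]

lemma pair_not_mem_image_F {j : ℕ} (hjn : j ≠ n+1) {S' : Finset (Finset ℕ)}
    (hS' : IsNested2 n k' S') : ({n+1, j} : Finset ℕ) ∉ S'.image (F n j) := by
  intro h
  obtain ⟨C, hC, hFC⟩ := Finset.mem_image.mp h
  have h1 := F_erase_eq (j := j) (nmem_of_nested hS' C hC)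
  rw [hFC, Finset.erase_insert (by simp [Ne.symm hjn])] at h1
  have := (hS'.2.2.1 C hC).2
  rw [← h1] at this
  simp at this

lemma countA (hn : 2 ≤ n) :
    Nat.card {S : Finset (Finset ℕ) // IsNested2 (n+1) (k'+1) S ∧ caseA (n+1) S} =
      n * Tc n k' := by
  classical
  let Φ : ↥(Finset.Icc 1 n) × {S' : Finset (Finset ℕ) // IsNested2 n k' S'} →
      {S : Finset (Finset ℕ) // IsNested2 (n+1) (k'+1) S ∧ caseA (n+1) S} :=
    fun x => ⟨insert {n+1, x.1.1} (x.2.1.image (F n x.1.1)), Fwd x.1.2 x.2.2⟩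
  have hbij : Function.Bijective Φ := by
    constructor
    · rintro ⟨⟨j₁, hj1⟩, ⟨S₁, hS1⟩⟩ ⟨⟨j₂, hj2⟩, ⟨S₂, hS2⟩⟩ h
      have hval : insert {n+1, j₁} (S₁.image (F n j₁)) =
          insert {n+1, j₂} (S₂.image (F n j₂)) := congrArg Subtype.val h
      have hV : IsNested2 (n+1) (k'+1) (insert {n+1, j₁} (S₁.image (F n j₁))) :=
        (Fwd hj1 hS1).1
      have hp1 : ({n+1, j₁} : Finset ℕ) ∈ insert {n+1, j₁} (S₁.image (F n j₁)) :=
        Finset.mem_insert_self _ _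
      have hp2 : ({n+1, j₂} : Finset ℕ) ∈ insert {n+1, j₁} (S₁.image (F n j₁)) := by
        rw [hval]; exact Finset.mem_insert_self _ _
      have hj : j₁ = j₂ := uniq_pair hV hp1 hp2
      subst hj
      have hjn : j₁ ≠ n + 1 := by simp at hj1; omega
      have hT : S₁.image (F n j₁) = S₂.image (F n j₁) := by
        rw [← Finset.erase_insert (pair_not_mem_image_F hjn hS1),
          ← Finset.erase_insert (pair_not_mem_image_F hjn hS2), hval]
      have hSS : S₁ = S₂ := by
        rw [← image_F_erase (j := j₁) hS1, hT, image_F_erase hS2]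
      subst hSS
      rfl
    · rintro ⟨V, hV, hcA⟩
      obtain ⟨j, hjne, hjmem⟩ := hcA
      have hbound := hV.2.2.1
      have hjIcc : j ∈ Finset.Icc 1 n := by
        have := (hbound _ hjmem).1 (by simp : j ∈ ({n+1, j} : Finset ℕ))
        simp only [Finset.mem_Icc] at this ⊢
        omega
      set S' : Finset (Finset ℕ) := (V.erase {n+1, j}).image (fun C => C.erase (n+1)) with hS'def
      have hkey : ∀ D ∈ V.erase {n+1, j}, F n j (D.erase (n+1)) = D := by
        intro D hD
        obtain ⟨hne, hDV⟩ := Finset.mem_erase.mp hD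
        by_cases hN : (n+1) ∈ D
        · have hjD : j ∈ D := (min_pair hV hjmem hDV hN) (by simp)
          have hjD' : j ∈ D.erase (n+1) := Finset.mem_erase.mpr ⟨hjne, hjD⟩
          unfold F
          rw [if_pos hjD', Finset.insert_erase hN]
        · have hjD : j ∉ D := fun hjD => hN (mem_N_of_mem_j hV hjmem hDV hjD hne)
          have he : D.erase (n+1) = D := Finset.erase_eq_of_notMem hN
          unfold F
          rw [he, if_neg hjD]
      have himg : S'.image (F n j) = V.erase {n+1, j} :=
        image_left_inv_eq (V.erase {n+1, j}) (fun C => C.erase (n+1)) (F n j) hkey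
      have hScard : S'.card = k' := by
        rw [hS'def, card_image_left_inv (V.erase {n+1, j}) (fun C => C.erase (n+1)) (F n j) hkey,
          Finset.card_erase_of_mem hjmem, hV.1]
        omega
      have hrootne : Finset.Icc 1 (n+1) ≠ ({n+1, j} : Finset ℕ) := by
        intro h
        have h1 : (Finset.Icc 1 (n+1)).card = n + 1 := by simp
        have h2 : ({n+1, j} : Finset ℕ).card ≤ 2 :=
          le_trans (Finset.card_insert_le _ _) (by simp)
        rw [h] at h1
        omega
      have hS'nested : IsNested2 n k' S' := by
        refine ⟨hScard, ?_, ?_, ?_⟩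
        · rw [hS'def]
          refine Finset.mem_image.mpr ⟨Finset.Icc 1 (n+1),
            Finset.mem_erase.mpr ⟨hrootne, hV.2.1⟩, ?_⟩
          rw [Icc_succ_top, Finset.erase_insert (not_mem_Icc_self n)]
        · rintro A hA
          obtain ⟨D, hD, rfl⟩ := Finset.mem_image.mp hA
          obtain ⟨hne, hDV⟩ := Finset.mem_erase.mp hD
          constructor
          · intro x hx
            obtain ⟨hxne, hxD⟩ := Finset.mem_erase.mp hx
            have := (hbound D hDV).1 hxD
            simp only [Finset.mem_Icc] at this ⊢
            omega
          · by_cases hN : (n+1) ∈ D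
            · have hsub : ({n+1, j} : Finset ℕ) ⊆ D := min_pair hV hjmem hDV hN
              have hlt : ({n+1, j} : Finset ℕ).card < D.card :=
                Finset.card_lt_card (lt_of_le_of_ne hsub (fun h => hne h.symm))
              have h2 : ({n+1, j} : Finset ℕ).card = 2 := by
                rw [Finset.card_insert_of_notMem (by simp [Ne.symm hjne]), Finset.card_singleton]
              rw [Finset.card_erase_of_mem hN]
              omega
            · rw [Finset.erase_eq_of_notMem hN]
              exact (hbound D hDV).2
        · intro A hA B hB
          obtain ⟨D₁, hD1, rfl⟩ := Finset.mem_image.mp hA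
          obtain ⟨D₂, hD2, rfl⟩ := Finset.mem_image.mp hB
          rcases hV.2.2.2 D₁ (Finset.mem_erase.mp hD1).2 D₂ (Finset.mem_erase.mp hD2).2 with
            h | h | h
          · exact Or.inl (Finset.erase_subset_erase _ h)
          · exact Or.inr (Or.inl (Finset.erase_subset_erase _ h))
          · exact Or.inr (Or.inr (h.mono (Finset.erase_subset _ _) (Finset.erase_subset _ _)))
      refine ⟨⟨⟨j, hjIcc⟩, ⟨S', hS'nested⟩⟩, ?_⟩
      apply Subtype.ext
      show insert {n+1, j} (S'.image (F n j)) = V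
      rw [himg, Finset.insert_erase hjmem]
  rw [← Nat.card_eq_of_bijective Φ hbij, Nat.card_prod, Nat.card_eq_finsetCard, Nat.card_Icc]
  simp [Tc]
end treeRecA
section treeRecB
variable {n k' : ℕ}

/-- the insertion map for trees, caseB -/
noncomputable def G (n : ℕ) (B C : Finset ℕ) : Finset ℕ :=
  if B ⊂ C then insert (n+1) C else C

lemma G_erase_eq {B C : Finset ℕ} (hC : (n+1) ∉ C) : (G n B C).erase (n+1) = C := by
  unfold G
  by_cases h : B ⊂ C <;>
    simp [h, Finset.erase_insert hC, Finset.erase_eq_of_notMem hC]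

lemma image_G_erase {B : Finset ℕ} {S' : Finset (Finset ℕ)} (hS' : IsNested2 n k' S') :
    (S'.image (G n B)).image (fun C => C.erase (n+1)) = S' :=
  image_left_inv_eq S' (G n B) _ (fun C hC => G_erase_eq (nmem_of_nested hS' C hC))

lemma card_image_G {B : Finset ℕ} {S' : Finset (Finset ℕ)} (hS' : IsNested2 n k' S') :
    (S'.image (G n B)).card = k' := by
  rw [card_image_left_inv S' (G n B) (fun C => C.erase (n+1))
    (fun C hC => G_erase_eq (nmem_of_nested hS' C hC)), hS'.1]

lemma insert_not_mem_image_G {B : Finset ℕ} (hNB : (n+1) ∉ B) {S' : Finset (Finset ℕ)}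
    (hS' : IsNested2 n k' S') : insert (n+1) B ∉ S'.image (G n B) := by
  intro h
  obtain ⟨C, hC, hGC⟩ := Finset.mem_image.mp h
  have h1 := G_erase_eq (B := B) (nmem_of_nested hS' C hC)
  rw [hGC, Finset.erase_insert hNB] at h1
  subst h1
  unfold G at hGC
  rw [if_neg (ssubset_irrefl B)] at hGC
  exact nmem_of_nested hS' B hC (hGC ▸ Finset.mem_insert_self _ _)

lemma FwdB (hn : 2 ≤ n) {B : Finset ℕ} {S' : Finset (Finset ℕ)} (hS' : IsNested2 n k' S')
    (hB : B ∈ S') :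
    IsNested2 (n+1) (k'+1) (insert (insert (n+1) B) (S'.image (G n B))) ∧
      ¬ caseA (n+1) (insert (insert (n+1) B) (S'.image (G n B))) ∧
      caseB (n+1) (insert (insert (n+1) B) (S'.image (G n B))) := by
  classical
  have hnm := nmem_of_nested hS'
  have hNB : (n+1) ∉ B := hnm B hB
  have hBcard : 2 ≤ B.card := (hS'.2.2.1 B hB).2
  have hBsub : B ⊆ Finset.Icc 1 n := (hS'.2.2.1 B hB).1
  have hVcard : (insert (insert (n+1) B) (S'.image (G n B))).card = k' + 1 := by
    rw [Finset.card_insert_of_notMem (insert_not_mem_image_G hNB hS'), card_image_G hS']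
  have hroot : Finset.Icc 1 (n+1) ∈ insert (insert (n+1) B) (S'.image (G n B)) := by
    by_cases hBroot : B = Finset.Icc 1 n
    · subst hBroot
      rw [Icc_succ_top]
      exact Finset.mem_insert_self _ _
    · have hss : B ⊂ Finset.Icc 1 n := lt_of_le_of_ne hBsub hBroot
      refine Finset.mem_insert_of_mem (Finset.mem_image.mpr ⟨Finset.Icc 1 n, hS'.2.1, ?_⟩)
      unfold G
      rw [if_pos hss, ← Icc_succ_top]
  have hGmono : ∀ C₁ C₂ : Finset ℕ, C₁ ⊆ C₂ → G n B C₁ ⊆ G n B C₂ := by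
    intro C₁ C₂ hsub
    unfold G
    by_cases h1 : B ⊂ C₁
    · have h2 : B ⊂ C₂ := lt_of_lt_of_le h1 hsub
      rw [if_pos h1, if_pos h2]
      exact Finset.insert_subset_insert _ hsub
    · rw [if_neg h1]
      by_cases h2 : B ⊂ C₂
      · rw [if_pos h2]; exact hsub.trans (Finset.subset_insert _ _)
      · rw [if_neg h2]; exact hsub
  have hGdis : ∀ C₁ ∈ S', ∀ C₂ ∈ S', Disjoint C₁ C₂ → Disjoint (G n B C₁) (G n B C₂) := by
    intro C₁ hC1 C₂ hC2 hdis
    have hBne : B.Nonempty := Finset.card_pos.mp (by omega)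
    unfold G
    by_cases h1 : B ⊂ C₁
    · have h2 : ¬ B ⊂ C₂ := by
        intro h2
        obtain ⟨x, hx⟩ := hBne
        exact Finset.disjoint_left.mp hdis (h1.1 hx) (h2.1 hx)
      rw [if_pos h1, if_neg h2, Finset.disjoint_insert_left]
      exact ⟨hnm C₂ hC2, hdis⟩
    · rw [if_neg h1]
      by_cases h2 : B ⊂ C₂
      · rw [if_pos h2, Finset.disjoint_insert_right]
        exact ⟨hnm C₁ hC1, hdis⟩
      · rw [if_neg h2]; exact hdis
  have hBmem : B ∈ insert (insert (n+1) B) (S'.image (G n B)) := by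
    refine Finset.mem_insert_of_mem (Finset.mem_image.mpr ⟨B, hB, ?_⟩)
    unfold G
    rw [if_neg (ssubset_irrefl B)]
  refine ⟨⟨hVcard, hroot, ?_, ?_⟩, ?_, ⟨B, hBmem, hNB, Finset.mem_insert_self _ _⟩⟩
  · -- bounds
    intro A hA
    rcases Finset.mem_insert.mp hA with rfl | hA
    · constructor
      · rw [Icc_succ_top]
        exact Finset.insert_subset_insert _ hBsub
      · rw [Finset.card_insert_of_notMem hNB]; omega
    · obtain ⟨C, hC, rfl⟩ := Finset.mem_image.mp hA
      obtain ⟨hCsub, hCcard⟩ := hS'.2.2.1 C hC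
      constructor
      · unfold G
        by_cases h : B ⊂ C
        · rw [if_pos h, Icc_succ_top]
          exact Finset.insert_subset_insert _ hCsub
        · rw [if_neg h]
          exact hCsub.trans (by rw [Icc_succ_top]; exact Finset.subset_insert _ _)
      · unfold G
        by_cases h : B ⊂ C
        · rw [if_pos h]
          exact le_trans hCcard (Finset.card_le_card (Finset.subset_insert _ _))
        · rw [if_neg h]; exact hCcard
  · -- nestedness
    intro A hA D hD
    rcases Finset.mem_insert.mp hA with rfl | hA
    · rcases Finset.mem_insert.mp hD with rfl | hD
      · exact Or.inl Finset.Subset.rfl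
      · obtain ⟨C, hC, rfl⟩ := Finset.mem_image.mp hD
        by_cases h : B ⊂ C
        · left
          unfold G; rw [if_pos h]
          exact Finset.insert_subset_insert _ h.1
        · rcases hS'.2.2.2 B hB C hC with h1 | h1 | h1
          · have : B = C := by
              rcases lt_or_eq_of_le h1 with h2 | h2
              · exact absurd h2 h
              · exact h2
            subst this
            right; left
            unfold G; rw [if_neg h]
            exact Finset.subset_insert _ _
          · right; left
            unfold G; rw [if_neg h]
            exact h1.trans (Finset.subset_insert _ _)
          · right; right
            unfold G; rw [if_neg h]
            rw [Finset.disjoint_insert_left]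
            exact ⟨hnm C hC, h1⟩
    · rcases Finset.mem_insert.mp hD with rfl | hD
      · obtain ⟨C, hC, rfl⟩ := Finset.mem_image.mp hA
        by_cases h : B ⊂ C
        · right; left
          unfold G; rw [if_pos h]
          exact Finset.insert_subset_insert _ h.1
        · rcases hS'.2.2.2 B hB C hC with h1 | h1 | h1
          · have : B = C := by
              rcases lt_or_eq_of_le h1 with h2 | h2
              · exact absurd h2 h
              · exact h2
            subst this
            left
            unfold G; rw [if_neg h]
            exact Finset.subset_insert _ _
          · left
            unfold G; rw [if_neg h]
            exact h1.trans (Finset.subset_insert _ _)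
          · right; right
            unfold G; rw [if_neg h]
            rw [Finset.disjoint_insert_right]
            exact ⟨hnm C hC, h1.symm⟩
      · obtain ⟨C₁, hC1, rfl⟩ := Finset.mem_image.mp hA
        obtain ⟨C₂, hC2, rfl⟩ := Finset.mem_image.mp hD
        rcases hS'.2.2.2 C₁ hC1 C₂ hC2 with h | h | h
        · exact Or.inl (hGmono _ _ h)
        · exact Or.inr (Or.inl (hGmono _ _ h))
        · exact Or.inr (Or.inr (hGdis _ hC1 _ hC2 h))
  · -- not caseA
    rintro ⟨j, hjne, hjmem⟩
    rcases Finset.mem_insert.mp hjmem with h | h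
    · have : ({n+1, j} : Finset ℕ).erase (n+1) = B := by rw [h, Finset.erase_insert hNB]
      rw [Finset.erase_insert (by simp [Ne.symm hjne])] at this
      rw [← this] at hBcard
      simp at hBcard
    · obtain ⟨C, hC, hGC⟩ := Finset.mem_image.mp h
      have h1 := G_erase_eq (B := B) (nmem_of_nested hS' C hC)
      rw [hGC, Finset.erase_insert (by simp [Ne.symm hjne])] at h1
      have := (hS'.2.2.1 C hC).2
      rw [← h1] at this
      simp at this

lemma countB (hn : 2 ≤ n) :
    Nat.card {S : Finset (Finset ℕ) // IsNested2 (n+1) (k'+1) S ∧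
      ¬ caseA (n+1) S ∧ caseB (n+1) S} = k' * Tc n k' := by
  classical
  let Φ : (Σ _x : {S' : Finset (Finset ℕ) // IsNested2 n k' S'}, {B : Finset ℕ // B ∈ _x.1}) →
      {S : Finset (Finset ℕ) // IsNested2 (n+1) (k'+1) S ∧ ¬ caseA (n+1) S ∧ caseB (n+1) S} :=
    fun x => ⟨insert (insert (n+1) x.2.1) (x.1.1.image (G n x.2.1)), FwdB hn x.1.2 x.2.2⟩
  have hbij : Function.Bijective Φ := by
    constructor
    · rintro ⟨⟨S₁, hS1⟩, ⟨B₁, hB1⟩⟩ ⟨⟨S₂, hS2⟩, ⟨B₂, hB2⟩⟩ h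
      have hval : insert (insert (n+1) B₁) (S₁.image (G n B₁)) =
          insert (insert (n+1) B₂) (S₂.image (G n B₂)) := congrArg Subtype.val h
      obtain ⟨hV, -, hcB1⟩ := FwdB hn hS1 hB1 (B := B₁)
      obtain ⟨-, -, hcB2⟩ := FwdB hn hS2 hB2 (B := B₂)
      obtain ⟨B₁', hm1, hn1, hi1⟩ := hcB1
      -- B₁' should be B₁; but use uniqueness directly on both patterns in the common value
      have hNB1 : (n+1) ∉ B₁ := nmem_of_nested hS1 B₁ hB1
      have hNB2 : (n+1) ∉ B₂ := nmem_of_nested hS2 B₂ hB2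
      have hB1mem : B₁ ∈ insert (insert (n+1) B₁) (S₁.image (G n B₁)) := by
        refine Finset.mem_insert_of_mem (Finset.mem_image.mpr ⟨B₁, hB1, ?_⟩)
        unfold G; rw [if_neg (ssubset_irrefl B₁)]
      have hB2mem : B₂ ∈ insert (insert (n+1) B₁) (S₁.image (G n B₁)) := by
        rw [hval]
        refine Finset.mem_insert_of_mem (Finset.mem_image.mpr ⟨B₂, hB2, ?_⟩)
        unfold G; rw [if_neg (ssubset_irrefl B₂)]
      have hiB1mem : insert (n+1) B₁ ∈ insert (insert (n+1) B₁) (S₁.image (G n B₁)) :=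
        Finset.mem_insert_self _ _
      have hiB2mem : insert (n+1) B₂ ∈ insert (insert (n+1) B₁) (S₁.image (G n B₁)) := by
        rw [hval]; exact Finset.mem_insert_self _ _
      have hBB : B₁ = B₂ := uniq_insert hV hB1mem hiB1mem hNB1 hB2mem hiB2mem hNB2
      subst hBB
      have hT : S₁.image (G n B₁) = S₂.image (G n B₁) := by
        rw [← Finset.erase_insert (insert_not_mem_image_G hNB1 hS1),
          ← Finset.erase_insert (insert_not_mem_image_G hNB1 hS2), hval]
      have hSS : S₁ = S₂ := by
        rw [← image_G_erase (B := B₁) hS1, hT, image_G_erase hS2]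
      subst hSS
      rfl
    · rintro ⟨V, hV, hnA, hcB⟩
      obtain ⟨B₀, hB0V, hNB0, hiB0⟩ := hcB
      have hbound := hV.2.2.1
      have hB0card : 2 ≤ B₀.card := (hbound B₀ hB0V).2
      have hB0ne : B₀ ≠ insert (n+1) B₀ := by
        intro h
        exact hNB0 (h ▸ Finset.mem_insert_self _ _)
      set S' : Finset (Finset ℕ) :=
        (V.erase (insert (n+1) B₀)).image (fun C => C.erase (n+1)) with hS'def
      have hkey : ∀ D ∈ V.erase (insert (n+1) B₀), G n B₀ (D.erase (n+1)) = D := by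
        intro D hD
        obtain ⟨hne, hDV⟩ := Finset.mem_erase.mp hD
        by_cases hN : (n+1) ∈ D
        · have hsub : insert (n+1) B₀ ⊆ D := insert_min hV hB0V hiB0 hNB0 hDV hN
          have hss : insert (n+1) B₀ ⊂ D := lt_of_le_of_ne hsub (fun h => hne h.symm)
          have hss2 : B₀ ⊂ D.erase (n+1) := by
            obtain ⟨y, hyD, hyn⟩ := Finset.exists_of_ssubset hss
            have hysub : B₀ ⊆ D.erase (n+1) := by
              intro x hx
              refine Finset.mem_erase.mpr ⟨fun h => hNB0 (h ▸ hx), hsub (Finset.mem_insert_of_mem hx)⟩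
            rw [Finset.ssubset_iff_of_subset hysub]
            refine ⟨y, Finset.mem_erase.mpr ⟨fun h => hyn (h ▸ Finset.mem_insert_self _ _), hyD⟩,
              fun h => hyn (Finset.mem_insert_of_mem h)⟩
          unfold G
          rw [if_pos hss2, Finset.insert_erase hN]
        · have hns : ¬ B₀ ⊂ D := fun hss => hN (mem_N_of_ssupset hV hB0V hiB0 hNB0 hDV hss)
          have he : D.erase (n+1) = D := Finset.erase_eq_of_notMem hN
          unfold G
          rw [he, if_neg hns]
      have himg : S'.image (G n B₀) = V.erase (insert (n+1) B₀) :=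
        image_left_inv_eq (V.erase (insert (n+1) B₀)) (fun C => C.erase (n+1)) (G n B₀) hkey
      have hScard : S'.card = k' := by
        rw [hS'def, card_image_left_inv (V.erase (insert (n+1) B₀)) (fun C => C.erase (n+1))
          (G n B₀) hkey, Finset.card_erase_of_mem hiB0, hV.1]
        omega
      have hS'nested : IsNested2 n k' S' := by
        refine ⟨hScard, ?_, ?_, ?_⟩
        · by_cases hroot : insert (n+1) B₀ = Finset.Icc 1 (n+1)
          · have hB0root : B₀ = Finset.Icc 1 n := by
              have := congrArg (fun s => Finset.erase s (n+1)) hroot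
              simpa [Finset.erase_insert hNB0, Icc_succ_top,
                Finset.erase_insert (not_mem_Icc_self n)] using this
            refine Finset.mem_image.mpr ⟨B₀, Finset.mem_erase.mpr ⟨hB0ne, hB0V⟩, ?_⟩
            rw [Finset.erase_eq_of_notMem hNB0, hB0root]
          · refine Finset.mem_image.mpr ⟨Finset.Icc 1 (n+1),
              Finset.mem_erase.mpr ⟨fun h => hroot h.symm, hV.2.1⟩, ?_⟩
            rw [Icc_succ_top, Finset.erase_insert (not_mem_Icc_self n)]
        · rintro A hA
          obtain ⟨D, hD, rfl⟩ := Finset.mem_image.mp hA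
          obtain ⟨hne, hDV⟩ := Finset.mem_erase.mp hD
          constructor
          · intro x hx
            obtain ⟨hxne, hxD⟩ := Finset.mem_erase.mp hx
            have := (hbound D hDV).1 hxD
            simp only [Finset.mem_Icc] at this ⊢
            omega
          · by_cases hN : (n+1) ∈ D
            · have hsub : insert (n+1) B₀ ⊆ D := insert_min hV hB0V hiB0 hNB0 hDV hN
              have hlt : (insert (n+1) B₀).card < D.card :=
                Finset.card_lt_card (lt_of_le_of_ne hsub (fun h => hne h.symm))
              rw [Finset.card_insert_of_notMem hNB0] at hlt
              rw [Finset.card_erase_of_mem hN]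
              omega
            · rw [Finset.erase_eq_of_notMem hN]
              exact (hbound D hDV).2
        · intro A hA D hD
          obtain ⟨D₁, hD1, rfl⟩ := Finset.mem_image.mp hA
          obtain ⟨D₂, hD2, rfl⟩ := Finset.mem_image.mp hD
          rcases hV.2.2.2 D₁ (Finset.mem_erase.mp hD1).2 D₂ (Finset.mem_erase.mp hD2).2 with
            h | h | h
          · exact Or.inl (Finset.erase_subset_erase _ h)
          · exact Or.inr (Or.inl (Finset.erase_subset_erase _ h))
          · exact Or.inr (Or.inr (h.mono (Finset.erase_subset _ _) (Finset.erase_subset _ _)))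
      have hB0S' : B₀ ∈ S' := by
        refine Finset.mem_image.mpr ⟨B₀, Finset.mem_erase.mpr ⟨hB0ne, hB0V⟩, ?_⟩
        exact Finset.erase_eq_of_notMem hNB0
      refine ⟨⟨⟨S', hS'nested⟩, ⟨B₀, hB0S'⟩⟩, ?_⟩
      apply Subtype.ext
      show insert (insert (n+1) B₀) (S'.image (G n B₀)) = V
      rw [himg, Finset.insert_erase hiB0]
  rw [← Nat.card_eq_of_bijective Φ hbij]
  have : ∀ x : {S' : Finset (Finset ℕ) // IsNested2 n k' S'},
      Nat.card {B : Finset ℕ // B ∈ x.1} = k' := by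
    intro x
    rw [Nat.card_eq_finsetCard, x.2.1]
  have hfin : Finite {S' : Finset (Finset ℕ) // IsNested2 n k' S'} := finite_nested' n k'
  rw [card_sigma_const _ k' this]
  rfl
end treeRecB
section treeRecC
variable {n k' : ℕ}

/-- the insertion map for trees, caseC -/
noncomputable def H (n : ℕ) (B C : Finset ℕ) : Finset ℕ :=
  if B ⊆ C then insert (n+1) C else C

lemma H_erase_eq {B C : Finset ℕ} (hC : (n+1) ∉ C) : (H n B C).erase (n+1) = C := by
  unfold H
  by_cases h : B ⊆ C <;>
    simp [h, Finset.erase_insert hC, Finset.erase_eq_of_notMem hC]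

lemma image_H_erase {B : Finset ℕ} {S' : Finset (Finset ℕ)} {k : ℕ} (hS' : IsNested2 n k S') :
    (S'.image (H n B)).image (fun C => C.erase (n+1)) = S' :=
  image_left_inv_eq S' (H n B) _ (fun C hC => H_erase_eq (nmem_of_nested hS' C hC))

lemma card_image_H {B : Finset ℕ} {S' : Finset (Finset ℕ)} {k : ℕ} (hS' : IsNested2 n k S') :
    (S'.image (H n B)).card = k := by
  rw [card_image_left_inv S' (H n B) (fun C => C.erase (n+1))
    (fun C hC => H_erase_eq (nmem_of_nested hS' C hC)), hS'.1]

lemma FwdC {B : Finset ℕ} {S' : Finset (Finset ℕ)} (hS' : IsNested2 n (k'+1) S')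
    (hB : B ∈ S') :
    IsNested2 (n+1) (k'+1) (S'.image (H n B)) ∧
      ¬ caseA (n+1) (S'.image (H n B)) ∧ ¬ caseB (n+1) (S'.image (H n B)) := by
  classical
  have hnm := nmem_of_nested hS'
  have hNB : (n+1) ∉ B := hnm B hB
  have hBcard : 2 ≤ B.card := (hS'.2.2.1 B hB).2
  have hBsub : B ⊆ Finset.Icc 1 n := (hS'.2.2.1 B hB).1
  have hroot : Finset.Icc 1 (n+1) ∈ S'.image (H n B) := by
    refine Finset.mem_image.mpr ⟨Finset.Icc 1 n, hS'.2.1, ?_⟩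
    unfold H
    rw [if_pos hBsub, ← Icc_succ_top]
  have hHmono : ∀ C₁ C₂ : Finset ℕ, C₁ ⊆ C₂ → H n B C₁ ⊆ H n B C₂ := by
    intro C₁ C₂ hsub
    unfold H
    by_cases h1 : B ⊆ C₁
    · have h2 : B ⊆ C₂ := h1.trans hsub
      rw [if_pos h1, if_pos h2]
      exact Finset.insert_subset_insert _ hsub
    · rw [if_neg h1]
      by_cases h2 : B ⊆ C₂
      · rw [if_pos h2]; exact hsub.trans (Finset.subset_insert _ _)
      · rw [if_neg h2]; exact hsub
  have hHdis : ∀ C₁ ∈ S', ∀ C₂ ∈ S', Disjoint C₁ C₂ → Disjoint (H n B C₁) (H n B C₂) := by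
    intro C₁ hC1 C₂ hC2 hdis
    have hBne : B.Nonempty := Finset.card_pos.mp (by omega)
    unfold H
    by_cases h1 : B ⊆ C₁
    · have h2 : ¬ B ⊆ C₂ := by
        intro h2
        obtain ⟨x, hx⟩ := hBne
        exact Finset.disjoint_left.mp hdis (h1 hx) (h2 hx)
      rw [if_pos h1, if_neg h2, Finset.disjoint_insert_left]
      exact ⟨hnm C₂ hC2, hdis⟩
    · rw [if_neg h1]
      by_cases h2 : B ⊆ C₂
      · rw [if_pos h2, Finset.disjoint_insert_right]
        exact ⟨hnm C₁ hC1, hdis⟩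
      · rw [if_neg h2]; exact hdis
  refine ⟨⟨card_image_H hS', hroot, ?_, ?_⟩, ?_, ?_⟩
  · intro A hA
    obtain ⟨C, hC, rfl⟩ := Finset.mem_image.mp hA
    obtain ⟨hCsub, hCcard⟩ := hS'.2.2.1 C hC
    constructor
    · unfold H
      by_cases h : B ⊆ C
      · rw [if_pos h, Icc_succ_top]
        exact Finset.insert_subset_insert _ hCsub
      · rw [if_neg h]
        exact hCsub.trans (by rw [Icc_succ_top]; exact Finset.subset_insert _ _)
    · unfold H
      by_cases h : B ⊆ C
      · rw [if_pos h]
        exact le_trans hCcard (Finset.card_le_card (Finset.subset_insert _ _))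
      · rw [if_neg h]; exact hCcard
  · intro A hA D hD
    obtain ⟨C₁, hC1, rfl⟩ := Finset.mem_image.mp hA
    obtain ⟨C₂, hC2, rfl⟩ := Finset.mem_image.mp hD
    rcases hS'.2.2.2 C₁ hC1 C₂ hC2 with h | h | h
    · exact Or.inl (hHmono _ _ h)
    · exact Or.inr (Or.inl (hHmono _ _ h))
    · exact Or.inr (Or.inr (hHdis _ hC1 _ hC2 h))
  · -- not caseA
    rintro ⟨j, hjne, hjmem⟩
    obtain ⟨C, hC, hHC⟩ := Finset.mem_image.mp hjmem
    have h1 := H_erase_eq (B := B) (nmem_of_nested hS' C hC)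
    rw [hHC, Finset.erase_insert (by simp [Ne.symm hjne])] at h1
    have := (hS'.2.2.1 C hC).2
    rw [← h1] at this
    simp at this
  · -- not caseB
    rintro ⟨D, hDmem, hND, hiD⟩
    obtain ⟨C, hC, hHC⟩ := Finset.mem_image.mp hiD
    have hCe := H_erase_eq (B := B) (nmem_of_nested hS' C hC)
    rw [hHC, Finset.erase_insert hND] at hCe
    subst hCe
    -- now C = D, so H n B D = insert (n+1) D, hence B ⊆ D
    have hBD : B ⊆ D := by
      by_contra hnBD
      unfold H at hHC
      rw [if_neg hnBD] at hHC
      exact hND (hHC ▸ Finset.mem_insert_self _ _)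
    obtain ⟨C', hC', hHC'⟩ := Finset.mem_image.mp hDmem
    by_cases h : B ⊆ C'
    · unfold H at hHC'
      rw [if_pos h] at hHC'
      exact hND (hHC' ▸ Finset.mem_insert_self _ _)
    · unfold H at hHC'
      rw [if_neg h] at hHC'
      subst hHC'
      exact h hBD

lemma countC (hn : 2 ≤ n) :
    Nat.card {S : Finset (Finset ℕ) // IsNested2 (n+1) (k'+1) S ∧
      ¬ caseA (n+1) S ∧ ¬ caseB (n+1) S} = (k'+1) * Tc n (k'+1) := by
  classical
  let Φ : (Σ _x : {S' : Finset (Finset ℕ) // IsNested2 n (k'+1) S'}, {B : Finset ℕ // B ∈ _x.1}) →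
      {S : Finset (Finset ℕ) // IsNested2 (n+1) (k'+1) S ∧
        ¬ caseA (n+1) S ∧ ¬ caseB (n+1) S} :=
    fun x => ⟨x.1.1.image (H n x.2.1), FwdC x.1.2 x.2.2⟩
  have hbij : Function.Bijective Φ := by
    constructor
    · rintro ⟨⟨S₁, hS1⟩, ⟨B₁, hB1⟩⟩ ⟨⟨S₂, hS2⟩, ⟨B₂, hB2⟩⟩ h
      have hval : S₁.image (H n B₁) = S₂.image (H n B₂) := congrArg Subtype.val h
      have hNB1 : (n+1) ∉ B₁ := nmem_of_nested hS1 B₁ hB1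
      have hNB2 : (n+1) ∉ B₂ := nmem_of_nested hS2 B₂ hB2
      have hSS : S₁ = S₂ := by
        rw [← image_H_erase (B := B₁) hS1, hval, image_H_erase hS2]
      have hmin : ∀ (S' : Finset (Finset ℕ)) (B : Finset ℕ), IsNested2 n (k'+1) S' → B ∈ S' →
          ∀ D ∈ S'.image (H n B), (n+1) ∈ D → insert (n+1) B ⊆ D := by
        intro S' B hS' hB D hD hND
        obtain ⟨C, hC, rfl⟩ := Finset.mem_image.mp hD
        by_cases h : B ⊆ C
        · unfold H at hND ⊢
          rw [if_pos h] at hND ⊢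
          exact Finset.insert_subset_insert _ h
        · unfold H at hND
          rw [if_neg h] at hND
          exact absurd hND (nmem_of_nested hS' C hC)
      have hm1 : insert (n+1) B₁ ∈ S₁.image (H n B₁) := by
        refine Finset.mem_image.mpr ⟨B₁, hB1, ?_⟩
        unfold H; rw [if_pos Finset.Subset.rfl]
      have hm2 : insert (n+1) B₂ ∈ S₁.image (H n B₁) := by
        rw [hval]
        refine Finset.mem_image.mpr ⟨B₂, hB2, ?_⟩
        unfold H; rw [if_pos Finset.Subset.rfl]
      have h12 : insert (n+1) B₁ ⊆ insert (n+1) B₂ :=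
        hmin S₁ B₁ hS1 hB1 _ hm2 (Finset.mem_insert_self _ _)
      have h21 : insert (n+1) B₂ ⊆ insert (n+1) B₁ := by
        refine hmin S₂ B₂ hS2 hB2 _ ?_ (Finset.mem_insert_self _ _)
        rw [← hval]; exact hm1
      have hBB : B₁ = B₂ := by
        have he : insert (n+1) B₁ = insert (n+1) B₂ := le_antisymm h12 h21
        calc B₁ = (insert (n+1) B₁).erase (n+1) := (Finset.erase_insert hNB1).symm
        _ = (insert (n+1) B₂).erase (n+1) := by rw [he]
        _ = B₂ := Finset.erase_insert hNB2
      subst hSS; subst hBB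
      rfl
    · rintro ⟨V, hV, hnA, hnB⟩
      have hbound := hV.2.2.1
      -- minimal set containing n+1
      have hfilne : (V.filter (fun C => (n+1) ∈ C)).Nonempty :=
        ⟨Finset.Icc 1 (n+1), Finset.mem_filter.mpr ⟨hV.2.1, by simp⟩⟩
      obtain ⟨A, hAf, hAmin⟩ : ∃ A ∈ V.filter (fun C => (n+1) ∈ C),
          ∀ x ∈ V.filter (fun C => (n+1) ∈ C), ¬ x < A := by
        obtain ⟨A, hA⟩ := exists_minimal_of_wellFoundedLT (· ∈ V.filter (fun C => (n+1) ∈ C)) hfilne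
        exact ⟨A, hA.prop, fun x hx => hA.not_lt hx⟩
      obtain ⟨hAV, hNA⟩ := Finset.mem_filter.mp hAf
      have hAleast : ∀ C ∈ V, (n+1) ∈ C → A ⊆ C := by
        intro C hC hNC
        rcases chain hV hAV hC hNA hNC with h | h
        · exact h
        · rcases eq_or_lt_of_le h with h1 | h1
          · exact le_of_eq h1.symm
          · exact absurd h1 (hAmin C (Finset.mem_filter.mpr ⟨hC, hNC⟩))
      have hA3 : 3 ≤ A.card := by
        have h2 := (hbound A hAV).2
        rcases eq_or_lt_of_le h2 with h1 | h1
        · exfalso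
          obtain ⟨j, hjne, hAeq⟩ := pair_eq_of_card_two hNA h1.symm
          exact hnA ⟨j, hjne, hAeq ▸ hAV⟩
        · omega
      set B : Finset ℕ := A.erase (n+1) with hBdef
      have hNB : (n+1) ∉ B := Finset.notMem_erase _ _
      have hiB : insert (n+1) B = A := Finset.insert_erase hNA
      have hBnotV : B ∉ V := fun hBV => hnB ⟨B, hBV, hNB, hiB ▸ hAV⟩
      have hBcard : 2 ≤ B.card := by
        rw [hBdef, Finset.card_erase_of_mem hNA]; omega
      have hkey : ∀ D ∈ V, H n B (D.erase (n+1)) = D := by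
        intro D hD
        by_cases hND : (n+1) ∈ D
        · have hsub : A ⊆ D := hAleast D hD hND
          have hBsub : B ⊆ D.erase (n+1) := Finset.erase_subset_erase _ hsub
          unfold H
          rw [if_pos hBsub, Finset.insert_erase hND]
        · have he : D.erase (n+1) = D := Finset.erase_eq_of_notMem hND
          have hnBD : ¬ B ⊆ D := by
            intro hBD
            rcases hV.2.2.2 A hAV D hD with h | h | h
            · exact hND (h hNA)
            · have hDB : D ⊆ B := fun x hx =>
                Finset.mem_erase.mpr ⟨fun hh => hND (hh ▸ hx), h hx⟩
              exact hBnotV ((le_antisymm hDB hBD).symm ▸ hD)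
            · obtain ⟨x, hx⟩ : B.Nonempty := Finset.card_pos.mp (by omega)
              exact Finset.disjoint_left.mp h (Finset.erase_subset _ _ hx) (hBD hx)
          unfold H
          rw [he, if_neg hnBD]
      set S' : Finset (Finset ℕ) := V.image (fun C => C.erase (n+1)) with hS'def
      have himg : S'.image (H n B) = V :=
        image_left_inv_eq V (fun C => C.erase (n+1)) (H n B) hkey
      have hScard : S'.card = k' + 1 := by
        rw [hS'def, card_image_left_inv V (fun C => C.erase (n+1)) (H n B) hkey, hV.1]
      have hS'nested : IsNested2 n (k'+1) S' := by
        refine ⟨hScard, ?_, ?_, ?_⟩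
        · refine Finset.mem_image.mpr ⟨Finset.Icc 1 (n+1), hV.2.1, ?_⟩
          rw [Icc_succ_top, Finset.erase_insert (not_mem_Icc_self n)]
        · rintro X hX
          obtain ⟨D, hD, rfl⟩ := Finset.mem_image.mp hX
          constructor
          · intro x hx
            obtain ⟨hxne, hxD⟩ := Finset.mem_erase.mp hx
            have := (hbound D hD).1 hxD
            simp only [Finset.mem_Icc] at this ⊢
            omega
          · by_cases hND : (n+1) ∈ D
            · have hsub : A ⊆ D := hAleast D hD hND
              have := Finset.card_le_card hsub
              rw [Finset.card_erase_of_mem hND]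
              omega
            · rw [Finset.erase_eq_of_notMem hND]
              exact (hbound D hD).2
        · intro X hX Y hY
          obtain ⟨D₁, hD1, rfl⟩ := Finset.mem_image.mp hX
          obtain ⟨D₂, hD2, rfl⟩ := Finset.mem_image.mp hY
          rcases hV.2.2.2 D₁ hD1 D₂ hD2 with h | h | h
          · exact Or.inl (Finset.erase_subset_erase _ h)
          · exact Or.inr (Or.inl (Finset.erase_subset_erase _ h))
          · exact Or.inr (Or.inr (h.mono (Finset.erase_subset _ _) (Finset.erase_subset _ _)))
      have hBS' : B ∈ S' := Finset.mem_image.mpr ⟨A, hAV, rfl⟩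
      refine ⟨⟨⟨S', hS'nested⟩, ⟨B, hBS'⟩⟩, ?_⟩
      exact Subtype.ext himg
  rw [← Nat.card_eq_of_bijective Φ hbij]
  have hcard : ∀ x : {S' : Finset (Finset ℕ) // IsNested2 n (k'+1) S'},
      Nat.card {B : Finset ℕ // B ∈ x.1} = k' + 1 := by
    intro x
    rw [Nat.card_eq_finsetCard, x.2.1]
  have hfin : Finite {S' : Finset (Finset ℕ) // IsNested2 n (k'+1) S'} := finite_nested' n (k'+1)
  rw [card_sigma_const _ (k'+1) hcard]
  rfl
end treeRecC
section treeRecFinal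

lemma treeRec {n : ℕ} (hn : 2 ≤ n) (k' : ℕ) :
    Tc (n+1) (k'+1) = (n + k') * Tc n k' + (k'+1) * Tc n (k'+1) := by
  classical
  have hfin : Finite {S : Finset (Finset ℕ) // IsNested2 (n+1) (k'+1) S} :=
    finite_nested' (n+1) (k'+1)
  have hfin2 : Finite {S : Finset (Finset ℕ) //
      IsNested2 (n+1) (k'+1) S ∧ ¬ caseA (n+1) S} := finite_nested _ _ _
  have e1 := card_split (IsNested2 (n+1) (k'+1)) (caseA (n+1))
  have e2 := card_split (fun S => IsNested2 (n+1) (k'+1) S ∧ ¬ caseA (n+1) S) (caseB (n+1))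
  have e3 : Nat.card {S : Finset (Finset ℕ) //
        (IsNested2 (n+1) (k'+1) S ∧ ¬ caseA (n+1) S) ∧ caseB (n+1) S} =
      Nat.card {S : Finset (Finset ℕ) //
        IsNested2 (n+1) (k'+1) S ∧ ¬ caseA (n+1) S ∧ caseB (n+1) S} :=
    Nat.card_congr (Equiv.subtypeEquivRight (fun S => by tauto))
  have e4 : Nat.card {S : Finset (Finset ℕ) //
        (IsNested2 (n+1) (k'+1) S ∧ ¬ caseA (n+1) S) ∧ ¬ caseB (n+1) S} =
      Nat.card {S : Finset (Finset ℕ) //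
        IsNested2 (n+1) (k'+1) S ∧ ¬ caseA (n+1) S ∧ ¬ caseB (n+1) S} :=
    Nat.card_congr (Equiv.subtypeEquivRight (fun S => by tauto))
  have : Tc (n+1) (k'+1) =
      n * Tc n k' + (k' * Tc n k' + (k'+1) * Tc n (k'+1)) := by
    rw [Tc, e1, countA hn, e2, e3, e4, countB hn, countC hn]
  rw [this]
  ring
end treeRecFinal
section partSide

/-- relabelling `{1,...,m} → {1,...,m+1} \ {j}` -/
def fj (j x : ℕ) : ℕ := if x < j then x else x + 1
/-- inverse relabelling -/
def gj (j y : ℕ) : ℕ := if y < j then y else y - 1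

lemma gj_fj (j x : ℕ) : gj j (fj j x) = x := by
  unfold fj gj; split_ifs <;> omega

lemma fj_gj {j y : ℕ} (h : y ≠ j) (h1 : 1 ≤ y) : fj j (gj j y) = y := by
  unfold fj gj; split_ifs <;> omega

lemma fj_Icc {m j : ℕ} (hj1 : 1 ≤ j) (hj2 : j ≤ m + 1) :
    (Finset.Icc 1 m).image (fj j) = (Finset.Icc 1 (m+1)).erase j := by
  ext y
  simp only [Finset.mem_image, Finset.mem_erase, Finset.mem_Icc]
  constructor
  · rintro ⟨x, hx, rfl⟩
    unfold fj; split_ifs <;> omega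
  · rintro ⟨hne, h1, h2⟩
    by_cases h : y < j
    · exact ⟨y, by omega, by unfold fj; rw [if_pos h]⟩
    · refine ⟨y - 1, by omega, ?_⟩
      unfold fj; rw [if_neg (by omega)]; omega

lemma part_subset {m k : ℕ} {P : Finset (Finset ℕ)} (hP : IsPart2 m k P) {A : Finset ℕ}
    (hA : A ∈ P) : A ⊆ Finset.Icc 1 m := by
  rw [← hP.2.2.2]; intro x hx; exact Finset.mem_biUnion.mpr ⟨A, hA, hx⟩

lemma part_block_uniq {m k : ℕ} {P : Finset (Finset ℕ)} (hP : IsPart2 m k P)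
    {A B : Finset ℕ} {x : ℕ} (hA : A ∈ P) (hB : B ∈ P) (hxA : x ∈ A) (hxB : x ∈ B) : A = B := by
  by_contra h
  exact (Finset.disjoint_left.mp (hP.2.2.1 A hA B hB h) hxA) hxB

lemma biUnion_erase_of_part {m k : ℕ} {P : Finset (Finset ℕ)} (hP : IsPart2 m k P)
    {A : Finset ℕ} (hA : A ∈ P) : (P.erase A).biUnion id = (Finset.Icc 1 m) \ A := by
  ext x
  simp only [Finset.mem_biUnion, Finset.mem_sdiff, id]
  constructor
  · rintro ⟨D, hD, hxD⟩
    obtain ⟨hne, hDP⟩ := Finset.mem_erase.mp hD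
    refine ⟨?_, fun hxA => Finset.disjoint_left.mp (hP.2.2.1 D hDP A hA hne) hxD hxA⟩
    rw [← hP.2.2.2]; exact Finset.mem_biUnion.mpr ⟨D, hDP, hxD⟩
  · rintro ⟨hx, hxA⟩
    rw [← hP.2.2.2] at hx
    obtain ⟨D, hD, hxD⟩ := Finset.mem_biUnion.mp hx
    exact ⟨D, Finset.mem_erase.mpr ⟨fun h => hxA (h ▸ hxD), hD⟩, hxD⟩

lemma biUnion_image_comm (Q : Finset (Finset ℕ)) (f : ℕ → ℕ) :
    (Q.image (Finset.image f)).biUnion id = (Q.biUnion id).image f := by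
  ext x
  simp only [Finset.mem_biUnion, Finset.mem_image, id]
  constructor
  · rintro ⟨D, ⟨A, hA, rfl⟩, hxD⟩
    obtain ⟨a, ha, rfl⟩ := Finset.mem_image.mp hxD
    exact ⟨a, ⟨A, hA, ha⟩, rfl⟩
  · rintro ⟨a, ⟨A, hA, ha⟩, rfl⟩
    exact ⟨A.image f, ⟨A, hA, rfl⟩, Finset.mem_image.mpr ⟨a, ha, rfl⟩⟩

lemma FwdP2 {m k j : ℕ} (hj1 : 1 ≤ j) (hj2 : j ≤ m + 1) {Q : Finset (Finset ℕ)}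
    (hQ : IsPart2 m k Q) :
    IsPart2 (m+2) (k+1) (insert {m+2, j} (Q.image (Finset.image (fj j)))) ∧
      caseA (m+2) (insert {m+2, j} (Q.image (Finset.image (fj j)))) := by
  classical
  have hjne : j ≠ m + 2 := by omega
  have hsub : ∀ A ∈ Q, A.image (fj j) ⊆ (Finset.Icc 1 (m+1)).erase j := by
    intro A hA
    rw [← fj_Icc hj1 hj2]
    exact Finset.image_subset_image (part_subset hQ hA)
  have hpairnot : ({m+2, j} : Finset ℕ) ∉ Q.image (Finset.image (fj j)) := by
    intro h
    obtain ⟨A, hA, hAe⟩ := Finset.mem_image.mp h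
    have : (m+2) ∈ A.image (fj j) := hAe ▸ Finset.mem_insert_self _ _
    have := Finset.mem_erase.mp (hsub A hA this)
    simp only [Finset.mem_Icc] at this
    omega
  have hcard : (insert {m+2, j} (Q.image (Finset.image (fj j)))).card = k + 1 := by
    rw [Finset.card_insert_of_notMem hpairnot,
      card_image_left_inv Q (Finset.image (fj j)) (Finset.image (gj j))
        (fun A _ => image_left_inv_eq A (fj j) (gj j) (fun x _ => gj_fj j x)), hQ.1]
  have hblockcard : ∀ A ∈ Q, (A.image (fj j)).card = A.card := fun A _ =>
    card_image_left_inv A (fj j) (gj j) (fun x _ => gj_fj j x)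
  refine ⟨⟨hcard, ?_, ?_, ?_⟩, ⟨j, hjne, Finset.mem_insert_self _ _⟩⟩
  · intro A hA
    rcases Finset.mem_insert.mp hA with rfl | hA
    · rw [Finset.card_insert_of_notMem (by simp [Ne.symm hjne])]; simp
    · obtain ⟨A', hA', rfl⟩ := Finset.mem_image.mp hA
      rw [hblockcard A' hA']
      exact hQ.2.1 A' hA'
  · intro A hA B hB hne
    rcases Finset.mem_insert.mp hA with rfl | hA
    · rcases Finset.mem_insert.mp hB with rfl | hB
      · exact absurd rfl hne
      · obtain ⟨B', hB', rfl⟩ := Finset.mem_image.mp hB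
        rw [Finset.disjoint_left]
        intro x hx
        rcases Finset.mem_insert.mp hx with rfl | hx
        · intro hmem
          have := Finset.mem_erase.mp (hsub B' hB' hmem)
          simp only [Finset.mem_Icc] at this; omega
        · simp only [Finset.mem_singleton] at hx; subst hx
          intro hmem
          exact (Finset.mem_erase.mp (hsub B' hB' hmem)).1 rfl
    · rcases Finset.mem_insert.mp hB with rfl | hB
      · obtain ⟨A', hA', rfl⟩ := Finset.mem_image.mp hA
        rw [Finset.disjoint_right]
        intro x hx
        rcases Finset.mem_insert.mp hx with rfl | hx
        · intro hmem
          have := Finset.mem_erase.mp (hsub A' hA' hmem)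
          simp only [Finset.mem_Icc] at this; omega
        · simp only [Finset.mem_singleton] at hx; subst hx
          intro hmem
          exact (Finset.mem_erase.mp (hsub A' hA' hmem)).1 rfl
      · obtain ⟨A', hA', rfl⟩ := Finset.mem_image.mp hA
        obtain ⟨B', hB', rfl⟩ := Finset.mem_image.mp hB
        have hne' : A' ≠ B' := fun h => hne (h ▸ rfl)
        have hdis := hQ.2.2.1 A' hA' B' hB' hne'
        rw [Finset.disjoint_left]
        rintro x hx hx2
        obtain ⟨a, ha, rfl⟩ := Finset.mem_image.mp hx
        obtain ⟨b, hb, hab⟩ := Finset.mem_image.mp hx2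
        have : b = a := by
          have := congrArg (gj j) hab
          rwa [gj_fj, gj_fj] at this
        subst this
        exact Finset.disjoint_left.mp hdis ha hb
  · rw [Finset.biUnion_insert]
    rw [biUnion_image_comm, hQ.2.2.2, fj_Icc hj1 hj2]
    ext x
    simp only [Finset.mem_union, Finset.mem_insert, Finset.mem_singleton, Finset.mem_erase,
      Finset.mem_Icc, id]
    omega

lemma countP2 (m k : ℕ) :
    Nat.card {P : Finset (Finset ℕ) // IsPart2 (m+2) (k+1) P ∧ caseA (m+2) P} =
      (m+1) * Pc m k := by
  classical
  let Φ : ↥(Finset.Icc 1 (m+1)) × {Q : Finset (Finset ℕ) // IsPart2 m k Q} →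
      {P : Finset (Finset ℕ) // IsPart2 (m+2) (k+1) P ∧ caseA (m+2) P} :=
    fun x => ⟨insert {m+2, x.1.1} (x.2.1.image (Finset.image (fj x.1.1))),
      FwdP2 (Finset.mem_Icc.mp x.1.2).1 (Finset.mem_Icc.mp x.1.2).2 x.2.2⟩
  have hbij : Function.Bijective Φ := by
    constructor
    · rintro ⟨⟨j₁, hj1⟩, ⟨Q₁, hQ1⟩⟩ ⟨⟨j₂, hj2⟩, ⟨Q₂, hQ2⟩⟩ h
      have hval : insert {m+2, j₁} (Q₁.image (Finset.image (fj j₁))) =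
          insert {m+2, j₂} (Q₂.image (Finset.image (fj j₂))) := congrArg Subtype.val h
      simp only [Finset.mem_Icc] at hj1 hj2
      have hP : IsPart2 (m+2) (k+1) (insert {m+2, j₁} (Q₁.image (Finset.image (fj j₁)))) :=
        (FwdP2 (by omega) (by omega) hQ1).1
      have hp1 : ({m+2, j₁} : Finset ℕ) ∈ insert {m+2, j₁} (Q₁.image (Finset.image (fj j₁))) :=
        Finset.mem_insert_self _ _
      have hp2 : ({m+2, j₂} : Finset ℕ) ∈ insert {m+2, j₁} (Q₁.image (Finset.image (fj j₁))) := by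
        rw [hval]; exact Finset.mem_insert_self _ _
      have hpe : ({m+2, j₁} : Finset ℕ) = {m+2, j₂} :=
        part_block_uniq hP hp1 hp2 (Finset.mem_insert_self _ _) (Finset.mem_insert_self _ _)
      have hj : j₁ = j₂ := by
        have : j₁ ∈ ({m+2, j₂} : Finset ℕ) := hpe ▸ (by simp : j₁ ∈ ({m+2, j₁} : Finset ℕ))
        rcases Finset.mem_insert.mp this with h1 | h1
        · omega
        · simpa using h1
      subst hj
      have hpn1 := (FwdP2 (m := m) (by omega : 1 ≤ j₁) (by omega) hQ1)
      have hT : Q₁.image (Finset.image (fj j₁)) = Q₂.image (Finset.image (fj j₁)) := by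
        have e1 : ({m+2, j₁} : Finset ℕ) ∉ Q₁.image (Finset.image (fj j₁)) := by
          intro hmem
          obtain ⟨A, hA, hAe⟩ := Finset.mem_image.mp hmem
          have h2 : (m+2) ∈ A.image (fj j₁) := hAe ▸ Finset.mem_insert_self _ _
          obtain ⟨a, ha, hae⟩ := Finset.mem_image.mp h2
          have := part_subset hQ1 hA ha
          simp only [Finset.mem_Icc] at this
          unfold fj at hae; split_ifs at hae <;> omega
        have e2 : ({m+2, j₁} : Finset ℕ) ∉ Q₂.image (Finset.image (fj j₁)) := by
          intro hmem
          obtain ⟨A, hA, hAe⟩ := Finset.mem_image.mp hmem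
          have h2 : (m+2) ∈ A.image (fj j₁) := hAe ▸ Finset.mem_insert_self _ _
          obtain ⟨a, ha, hae⟩ := Finset.mem_image.mp h2
          have := part_subset hQ2 hA ha
          simp only [Finset.mem_Icc] at this
          unfold fj at hae; split_ifs at hae <;> omega
        rw [← Finset.erase_insert e1, ← Finset.erase_insert e2, hval]
      have hQQ : Q₁ = Q₂ := by
        have r1 : (Q₁.image (Finset.image (fj j₁))).image (Finset.image (gj j₁)) = Q₁ :=
          image_left_inv_eq Q₁ _ _
            (fun A _ => image_left_inv_eq A (fj j₁) (gj j₁) (fun x _ => gj_fj j₁ x))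
        have r2 : (Q₂.image (Finset.image (fj j₁))).image (Finset.image (gj j₁)) = Q₂ :=
          image_left_inv_eq Q₂ _ _
            (fun A _ => image_left_inv_eq A (fj j₁) (gj j₁) (fun x _ => gj_fj j₁ x))
        rw [← r1, hT, r2]
      subst hQQ
      rfl
    · rintro ⟨V, hV, hcA⟩
      obtain ⟨j, hjne, hjmem⟩ := hcA
      have hjIcc : 1 ≤ j ∧ j ≤ m + 1 := by
        have := part_subset hV hjmem (by simp : j ∈ ({m+2, j} : Finset ℕ))
        simp only [Finset.mem_Icc] at this
        omega
      have hDfact : ∀ D ∈ V.erase {m+2, j}, D ⊆ (Finset.Icc 1 (m+1)).erase j ∧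
          (∀ x ∈ D, x ≠ j ∧ 1 ≤ x) := by
        intro D hD
        obtain ⟨hne, hDV⟩ := Finset.mem_erase.mp hD
        have hdis := hV.2.2.1 D hDV _ hjmem hne
        have hsubD := part_subset hV hDV
        constructor
        · intro x hx
          have hxI := hsubD hx
          simp only [Finset.mem_Icc] at hxI
          have hxp : x ∉ ({m+2, j} : Finset ℕ) := Finset.disjoint_left.mp hdis hx
          simp only [Finset.mem_insert, Finset.mem_singleton] at hxp
          push_neg at hxp
          simp only [Finset.mem_erase, Finset.mem_Icc]
          exact ⟨hxp.2, hxI.1, by omega⟩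
        · intro x hx
          have hxI := hsubD hx
          simp only [Finset.mem_Icc] at hxI
          have hxp : x ∉ ({m+2, j} : Finset ℕ) := Finset.disjoint_left.mp hdis hx
          simp only [Finset.mem_insert, Finset.mem_singleton] at hxp
          push_neg at hxp
          exact ⟨hxp.2, hxI.1⟩
      have hkey : ∀ D ∈ V.erase {m+2, j}, (D.image (gj j)).image (fj j) = D := by
        intro D hD
        exact image_left_inv_eq D (gj j) (fj j)
          (fun x hx => fj_gj ((hDfact D hD).2 x hx).1 ((hDfact D hD).2 x hx).2)
      set Q : Finset (Finset ℕ) := (V.erase {m+2, j}).image (Finset.image (gj j)) with hQdef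
      have himg : Q.image (Finset.image (fj j)) = V.erase {m+2, j} :=
        image_left_inv_eq (V.erase {m+2, j}) (Finset.image (gj j)) (Finset.image (fj j)) hkey
      have hQcard : Q.card = k := by
        rw [hQdef, card_image_left_inv (V.erase {m+2, j}) (Finset.image (gj j))
          (Finset.image (fj j)) hkey, Finset.card_erase_of_mem hjmem, hV.1]
        omega
      have hblockcard : ∀ D ∈ V.erase {m+2, j}, (D.image (gj j)).card = D.card := by
        intro D hD
        exact card_image_left_inv D (gj j) (fj j)
          (fun x hx => fj_gj ((hDfact D hD).2 x hx).1 ((hDfact D hD).2 x hx).2)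
      have hQpart : IsPart2 m k Q := by
        refine ⟨hQcard, ?_, ?_, ?_⟩
        · intro A hA
          obtain ⟨D, hD, rfl⟩ := Finset.mem_image.mp hA
          rw [hblockcard D hD]
          exact hV.2.1 D (Finset.mem_erase.mp hD).2
        · intro A hA B hB hne
          obtain ⟨D₁, hD1, rfl⟩ := Finset.mem_image.mp hA
          obtain ⟨D₂, hD2, rfl⟩ := Finset.mem_image.mp hB
          have hne' : D₁ ≠ D₂ := fun h => hne (h ▸ rfl)
          have hdis := hV.2.2.1 D₁ (Finset.mem_erase.mp hD1).2 D₂ (Finset.mem_erase.mp hD2).2 hne'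
          rw [Finset.disjoint_left]
          rintro x hx hx2
          obtain ⟨a, ha, rfl⟩ := Finset.mem_image.mp hx
          obtain ⟨b, hb, hab⟩ := Finset.mem_image.mp hx2
          have hb' : b = a := by
            have := congrArg (fj j) hab
            rw [fj_gj ((hDfact D₂ hD2).2 b hb).1 ((hDfact D₂ hD2).2 b hb).2,
              fj_gj ((hDfact D₁ hD1).2 a ha).1 ((hDfact D₁ hD1).2 a ha).2] at this
            exact this
          subst hb'
          exact Finset.disjoint_left.mp hdis ha hb
        · rw [hQdef, biUnion_image_comm, biUnion_erase_of_part hV hjmem]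
          have : (Finset.Icc 1 (m+2)) \ ({m+2, j} : Finset ℕ) =
              (Finset.Icc 1 (m+1)).erase j := by
            ext x
            simp only [Finset.mem_sdiff, Finset.mem_erase, Finset.mem_Icc, Finset.mem_insert,
              Finset.mem_singleton]
            constructor
            · rintro ⟨⟨h1, h2⟩, h3⟩
              push_neg at h3
              exact ⟨h3.2, h1, by omega⟩
            · rintro ⟨h1, h2, h3⟩
              refine ⟨⟨h2, by omega⟩, ?_⟩
              push_neg
              exact ⟨by omega, h1⟩
          rw [this, ← fj_Icc hjIcc.1 hjIcc.2]
          exact image_left_inv_eq (Finset.Icc 1 m) (fj j) (gj j) (fun x _ => gj_fj j x)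
      refine ⟨⟨⟨j, by simp only [Finset.mem_Icc]; omega⟩, ⟨Q, hQpart⟩⟩, ?_⟩
      apply Subtype.ext
      show insert {m+2, j} (Q.image (Finset.image (fj j))) = V
      rw [himg, Finset.insert_erase hjmem]
  rw [← Nat.card_eq_of_bijective Φ hbij, Nat.card_prod, Nat.card_eq_finsetCard, Nat.card_Icc]
  simp [Pc]
end partSide
section partSide3

lemma FwdP3 {m k : ℕ} {Q : Finset (Finset ℕ)} (hQ : IsPart2 (m+1) (k+1) Q) {B : Finset ℕ}
    (hB : B ∈ Q) :
    IsPart2 (m+2) (k+1) (insert (insert (m+2) B) (Q.erase B)) ∧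
      ¬ caseA (m+2) (insert (insert (m+2) B) (Q.erase B)) := by
  classical
  have hMB : (m+2) ∉ B := fun h => by
    have := part_subset hQ hB h
    simp only [Finset.mem_Icc] at this; omega
  have hM : ∀ C ∈ Q, (m+2) ∉ C := fun C hC h => by
    have := part_subset hQ hC h
    simp only [Finset.mem_Icc] at this; omega
  have hBcard : 2 ≤ B.card := hQ.2.1 B hB
  have hnotmem : insert (m+2) B ∉ Q.erase B := fun h =>
    hM _ (Finset.mem_erase.mp h).2 (Finset.mem_insert_self _ _)
  have hcard : (insert (insert (m+2) B) (Q.erase B)).card = k + 1 := by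
    rw [Finset.card_insert_of_notMem hnotmem, Finset.card_erase_of_mem hB, hQ.1]
    omega
  refine ⟨⟨hcard, ?_, ?_, ?_⟩, ?_⟩
  · intro A hA
    rcases Finset.mem_insert.mp hA with rfl | hA
    · rw [Finset.card_insert_of_notMem hMB]; omega
    · exact hQ.2.1 A (Finset.mem_erase.mp hA).2
  · intro A hA C hC hne
    rcases Finset.mem_insert.mp hA with rfl | hA
    · rcases Finset.mem_insert.mp hC with rfl | hC
      · exact absurd rfl hne
      · obtain ⟨hne2, hCQ⟩ := Finset.mem_erase.mp hC
        rw [Finset.disjoint_insert_left]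
        exact ⟨hM C hCQ, hQ.2.2.1 B hB C hCQ (Ne.symm hne2)⟩
    · rcases Finset.mem_insert.mp hC with rfl | hC
      · obtain ⟨hne2, hAQ⟩ := Finset.mem_erase.mp hA
        rw [Finset.disjoint_insert_right]
        exact ⟨hM A hAQ, hQ.2.2.1 A hAQ B hB hne2⟩
      · exact hQ.2.2.1 A (Finset.mem_erase.mp hA).2 C (Finset.mem_erase.mp hC).2 hne
  · rw [Finset.biUnion_insert, biUnion_erase_of_part hQ hB]
    have hBsub := part_subset hQ hB
    ext x
    simp only [Finset.mem_union, Finset.mem_insert, Finset.mem_sdiff, Finset.mem_Icc, id]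
    constructor
    · rintro ((rfl | hxB) | ⟨⟨h1, h2⟩, h3⟩)
      · omega
      · have := hBsub hxB
        simp only [Finset.mem_Icc] at this
        omega
      · omega
    · rintro ⟨h1, h2⟩
      by_cases hxB : x ∈ B
      · exact Or.inl (Or.inr hxB)
      · by_cases hx2 : x = m+2
        · exact Or.inl (Or.inl hx2)
        · exact Or.inr ⟨⟨h1, by omega⟩, hxB⟩
  · rintro ⟨j, hjne, hjmem⟩
    rcases Finset.mem_insert.mp hjmem with h | h
    · have : ({m+2, j} : Finset ℕ).card = 2 := by
        rw [Finset.card_insert_of_notMem (by simp [Ne.symm hjne]), Finset.card_singleton]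
      rw [h, Finset.card_insert_of_notMem hMB] at this
      omega
    · exact hM _ (Finset.mem_erase.mp h).2 (Finset.mem_insert_self _ _)

end partSide3
section partSide3b

lemma countP3 (m k : ℕ) :
    Nat.card {P : Finset (Finset ℕ) // IsPart2 (m+2) (k+1) P ∧ ¬ caseA (m+2) P} =
      (k+1) * Pc (m+1) (k+1) := by
  classical
  let Φ : (Σ _x : {Q : Finset (Finset ℕ) // IsPart2 (m+1) (k+1) Q}, {B : Finset ℕ // B ∈ _x.1}) →
      {P : Finset (Finset ℕ) // IsPart2 (m+2) (k+1) P ∧ ¬ caseA (m+2) P} :=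
    fun x => ⟨insert (insert (m+2) x.2.1) (x.1.1.erase x.2.1), FwdP3 x.1.2 x.2.2⟩
  have hbij : Function.Bijective Φ := by
    constructor
    · rintro ⟨⟨Q₁, hQ1⟩, ⟨B₁, hB1⟩⟩ ⟨⟨Q₂, hQ2⟩, ⟨B₂, hB2⟩⟩ h
      have hval : insert (insert (m+2) B₁) (Q₁.erase B₁) =
          insert (insert (m+2) B₂) (Q₂.erase B₂) := congrArg Subtype.val h
      have hM1 : ∀ C ∈ Q₁, (m+2) ∉ C := fun C hC hh => by
        have := part_subset hQ1 hC hh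
        simp only [Finset.mem_Icc] at this; omega
      have hM2 : ∀ C ∈ Q₂, (m+2) ∉ C := fun C hC hh => by
        have := part_subset hQ2 hC hh
        simp only [Finset.mem_Icc] at this; omega
      have hMB1 : (m+2) ∉ B₁ := hM1 B₁ hB1
      have hMB2 : (m+2) ∉ B₂ := hM2 B₂ hB2
      have hXX : insert (m+2) B₁ = insert (m+2) B₂ := by
        have h1 : insert (m+2) B₁ ∈ insert (insert (m+2) B₂) (Q₂.erase B₂) := by
          rw [← hval]; exact Finset.mem_insert_self _ _
        rcases Finset.mem_insert.mp h1 with h2 | h2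
        · exact h2
        · exact absurd (Finset.mem_insert_self (m+2) B₁)
            (hM2 _ (Finset.mem_erase.mp h2).2)
      have hBB : B₁ = B₂ := by
        calc B₁ = (insert (m+2) B₁).erase (m+2) := (Finset.erase_insert hMB1).symm
        _ = (insert (m+2) B₂).erase (m+2) := by rw [hXX]
        _ = B₂ := Finset.erase_insert hMB2
      subst hBB
      have hnm1 : insert (m+2) B₁ ∉ Q₁.erase B₁ := fun hh =>
        hM1 _ (Finset.mem_erase.mp hh).2 (Finset.mem_insert_self _ _)
      have hnm2 : insert (m+2) B₁ ∉ Q₂.erase B₁ := fun hh =>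
        hM2 _ (Finset.mem_erase.mp hh).2 (Finset.mem_insert_self _ _)
      have hQe : Q₁.erase B₁ = Q₂.erase B₁ := by
        rw [← Finset.erase_insert hnm1, ← Finset.erase_insert hnm2, hval]
      have hQQ : Q₁ = Q₂ := by
        calc Q₁ = insert B₁ (Q₁.erase B₁) := (Finset.insert_erase hB1).symm
        _ = insert B₁ (Q₂.erase B₁) := by rw [hQe]
        _ = Q₂ := Finset.insert_erase hB2
      subst hQQ
      rfl
    · rintro ⟨V, hV, hnA⟩
      have hmm : (m+2) ∈ V.biUnion id := by
        rw [hV.2.2.2]; simp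
      obtain ⟨A, hAV, hmA⟩ := Finset.mem_biUnion.mp hmm
      simp only [id_eq] at hmA
      have hA3 : 3 ≤ A.card := by
        have h2 := hV.2.1 A hAV
        rcases eq_or_lt_of_le h2 with h1 | h1
        · exfalso
          obtain ⟨j, hjne, hAeq⟩ := pair_eq_of_card_two hmA h1.symm
          exact hnA ⟨j, hjne, hAeq ▸ hAV⟩
        · omega
      set B : Finset ℕ := A.erase (m+2) with hBdef
      have hMB : (m+2) ∉ B := Finset.notMem_erase _ _
      have hiB : insert (m+2) B = A := Finset.insert_erase hmA
      have hBcard : 2 ≤ B.card := by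
        rw [hBdef, Finset.card_erase_of_mem hmA]; omega
      have hBne : B.Nonempty := Finset.card_pos.mp (by omega)
      have hBnot : B ∉ V.erase A := by
        intro hh
        obtain ⟨hne, hBV⟩ := Finset.mem_erase.mp hh
        have hdis := hV.2.2.1 B hBV A hAV hne
        obtain ⟨x, hx⟩ := hBne
        exact Finset.disjoint_left.mp hdis hx (Finset.erase_subset _ _ hx)
      set Q : Finset (Finset ℕ) := insert B (V.erase A) with hQdef
      have hQcard : Q.card = k + 1 := by
        rw [hQdef, Finset.card_insert_of_notMem hBnot, Finset.card_erase_of_mem hAV, hV.1]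
        omega
      have hQpart : IsPart2 (m+1) (k+1) Q := by
        refine ⟨hQcard, ?_, ?_, ?_⟩
        · intro C hC
          rcases Finset.mem_insert.mp hC with rfl | hC
          · exact hBcard
          · exact hV.2.1 C (Finset.mem_erase.mp hC).2
        · intro X hX Y hY hne
          rcases Finset.mem_insert.mp hX with rfl | hX
          · rcases Finset.mem_insert.mp hY with rfl | hY
            · exact absurd rfl hne
            · obtain ⟨hne2, hYV⟩ := Finset.mem_erase.mp hY
              exact ((hV.2.2.1 A hAV Y hYV (Ne.symm hne2)).mono_left
                (Finset.erase_subset _ _))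
          · rcases Finset.mem_insert.mp hY with rfl | hY
            · obtain ⟨hne2, hXV⟩ := Finset.mem_erase.mp hX
              exact ((hV.2.2.1 X hXV A hAV hne2).mono_right (Finset.erase_subset _ _))
            · exact hV.2.2.1 X (Finset.mem_erase.mp hX).2 Y (Finset.mem_erase.mp hY).2 hne
        · rw [hQdef, Finset.biUnion_insert, biUnion_erase_of_part hV hAV]
          have hAsub := part_subset hV hAV
          ext x
          simp only [Finset.mem_union, Finset.mem_sdiff, Finset.mem_Icc, id]
          constructor
          · rintro (hxB | ⟨⟨h1, h2⟩, h3⟩)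
            · have hxA : x ∈ A := Finset.erase_subset _ _ hxB
              have := hAsub hxA
              simp only [Finset.mem_Icc] at this
              have : x ≠ m + 2 := (Finset.mem_erase.mp hxB).1
              have h4 := hAsub hxA
              simp only [Finset.mem_Icc] at h4
              omega
            · have : x ≠ m + 2 := by
                rintro rfl
                exact h3 hmA
              omega
          · rintro ⟨h1, h2⟩
            by_cases hxA : x ∈ A
            · left
              exact Finset.mem_erase.mpr ⟨by omega, hxA⟩
            · right
              exact ⟨⟨h1, by omega⟩, hxA⟩
      have hBQ : B ∈ Q := Finset.mem_insert_self _ _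
      refine ⟨⟨⟨Q, hQpart⟩, ⟨B, hBQ⟩⟩, ?_⟩
      apply Subtype.ext
      show insert (insert (m+2) B) (Q.erase B) = V
      rw [hQdef, Finset.erase_insert hBnot, hiB, Finset.insert_erase hAV]
  rw [← Nat.card_eq_of_bijective Φ hbij]
  have hcard : ∀ x : {Q : Finset (Finset ℕ) // IsPart2 (m+1) (k+1) Q},
      Nat.card {B : Finset ℕ // B ∈ x.1} = k + 1 := by
    intro x
    rw [Nat.card_eq_finsetCard, x.2.1]
  have hfin : Finite {Q : Finset (Finset ℕ) // IsPart2 (m+1) (k+1) Q} := finite_part' (m+1) (k+1)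
  rw [card_sigma_const _ (k+1) hcard]
  rfl
end partSide3b
section final

lemma partRec (m k : ℕ) :
    Pc (m+2) (k+1) = (m+1) * Pc m k + (k+1) * Pc (m+1) (k+1) := by
  classical
  have hfin : Finite {P : Finset (Finset ℕ) // IsPart2 (m+2) (k+1) P} := finite_part' (m+2) (k+1)
  have e1 := card_split (IsPart2 (m+2) (k+1)) (caseA (m+2))
  rw [Pc, e1, countP2, countP3]

lemma main : ∀ n, 2 ≤ n → ∀ k, 1 ≤ k → Tc n k = Pc (n + k - 1) k := by
  intro n hn
  induction n, hn using Nat.le_induction with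
  | base =>
    intro k hk
    rcases eq_or_lt_of_le hk with h1 | h1
    · rw [← h1, Tc_two_one]
      have : 2 + 1 - 1 = 2 := by omega
      rw [this, Pc_two_one]
    · have hk2 : 2 ≤ k := h1
      rw [Tc_two k hk2]
      have : 2 + k - 1 = k + 1 := by omega
      rw [this, Pc_small (k+1) k (by omega)]
  | succ n hn IH =>
    intro k hk
    obtain ⟨p, rfl⟩ : ∃ p, n = p + 2 := ⟨n - 2, by omega⟩
    match k, hk with
    | 1, _ =>
      have h1 : Tc (p + 2 + 1) 1 = (p + 2 + 0) * Tc (p + 2) 0 + (0 + 1) * Tc (p + 2) (0 + 1) :=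
        treeRec (by omega) 0
      rw [Tc_zero] at h1
      have h2 : Pc (p + 1 + 2) (0 + 1) =
          (p + 1 + 1) * Pc (p + 1) 0 + (0 + 1) * Pc (p + 1 + 1) (0 + 1) := partRec (p+1) 0
      rw [Pc_zero (p+1) (by omega)] at h2
      have h3 := IH 1 (by omega)
      have e1 : p + 2 + 1 - 1 = p + 2 := by omega
      rw [e1] at h3
      have e2 : p + 2 + 1 + 1 - 1 = p + 1 + 2 := by omega
      rw [e2]
      simp only [Nat.mul_zero, Nat.zero_add, Nat.add_zero, Nat.one_mul] at h1 h2 ⊢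
      rw [h1, h2, h3]
    | (j+2), _ =>
      have h1 : Tc (p + 2 + 1) (j + 1 + 1) =
          (p + 2 + (j + 1)) * Tc (p + 2) (j + 1) +
            (j + 1 + 1) * Tc (p + 2) (j + 1 + 1) := treeRec (by omega) (j+1)
      have h2 : Pc (p + j + 2 + 2) (j + 1 + 1) =
          (p + j + 2 + 1) * Pc (p + j + 2) (j + 1) +
            (j + 1 + 1) * Pc (p + j + 2 + 1) (j + 1 + 1) := partRec (p + j + 2) (j + 1)
      have h3 := IH (j+1) (by omega)
      have h4 := IH (j+2) (by omega)
      have e3 : p + 2 + (j + 1) - 1 = p + j + 2 := by omega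
      rw [e3] at h3
      have e4 : p + 2 + (j + 2) - 1 = p + j + 2 + 1 := by omega
      rw [e4] at h4
      have e5 : p + 2 + 1 + (j + 2) - 1 = p + j + 2 + 2 := by omega
      rw [e5]
      have e6 : p + 2 + (j + 1) = p + j + 2 + 1 := by omega
      have e7 : (j + 1 + 1 : ℕ) = j + 2 := by omega
      have e8 : p + 2 + 1 = p + 3 := by omega
      rw [h2]
      rw [show Tc (p + 2 + 1) (j + 2) = Tc (p + 2 + 1) (j + 1 + 1) by rw [e7]]
      rw [h1, h3, h4, e6, e7]
end final
end Stmt15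

theorem stmt15 (n k : ℕ) (hn : 2 ≤ n) (hk1 : 1 ≤ k) (hk : k ≤ n - 1) :
    Nat.card {S : Finset (Finset ℕ) // IsNested2 n k S} =
      Nat.card {P : Finset (Finset ℕ) // IsPart2 (n + k - 1) k P} :=
  Stmt15.main n hn k hk1
end
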